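/- arXiv:1012.1066 — 2 statements merged into one kernel-verified Lean document; each statement's English description precedes it below -/
import Mathlib

section
/- Let 𝔍 be a W-graph ideal with respect to J, (c_w) the associated basis, μ_{y,w} the constant term of q_{y,w}. Define μ(c_y, c_w) = μ_{y,w} if y < w, μ_{w,y} if w < y, and 0 otherwise, and τ(c_w) = D_J(w) (the descent set of w). Then the triple (C, μ, τ) is a W-graph; i.e., the rules T_s c_w = −q⁻¹ c_w if s ∈ τ(c_w) and T_s c_w = q c_w + Σ_{u: s ∈ τ(u)} μ(u, c_w) u if s ∉ τ(c_w) define an H(W)-module structure on the free ℤ[q,q⁻¹]-module with basis C. -/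
open LaurentPolynomial Polynomial

noncomputable section

namespace WGI

/-- The ring `A = ℤ[q,q⁻¹]` of Laurent polynomials. -/
abbrev A : Type := LaurentPolynomial ℤ

/-- The indeterminate `q`. -/
def Q : A := LaurentPolynomial.T 1

/-- The element `q⁻¹`. -/
def Qi : A := LaurentPolynomial.T (-1)

variable {B W : Type} [Group W] {M : CoxeterMatrix B} (cs : CoxeterSystem M W)

/-- One step of the relation generating the Bruhat order: `w = tu` for a reflection `t`
(or `t = 1`) and `l(u) ≤ l(w)`. -/
def BStep (u w : W) : Prop :=
  cs.length u ≤ cs.length w ∧ ∃ t : W, (cs.IsReflection t ∨ t = 1) ∧ w = t * u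

/-- The Bruhat order on `W`: the transitive (and reflexive) closure of `BStep`. -/
def BrLe (u w : W) : Prop := Relation.ReflTransGen (BStep cs) u w

/-- Strict Bruhat order. -/
def BrLt (u w : W) : Prop := BrLe cs u w ∧ u ≠ w

/-- The left weak order: `u ≤_L w` iff `l(wu⁻¹) = l(w) - l(u)`, i.e. `u` is a suffix of `w`. -/
def WkLe (u w : W) : Prop := cs.length (w * u⁻¹) + cs.length u = cs.length w

/-- Strict left weak order. -/
def WkLt (u w : W) : Prop := WkLe cs u w ∧ u ≠ w

/-- An ideal of `(W, ≤_L)`: a subset closed under taking suffixes. -/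
def IsIdealWk (I : Set W) : Prop := ∀ u w : W, WkLe cs u w → w ∈ I → u ∈ I

/-- The set `D_J` of minimal left coset representatives of `W_J`. -/
def DD (J : Set B) : Set W := { w | ∀ j ∈ J, cs.length w < cs.length (w * cs.simple j) }

/-- Strong ascent: `sw > w` and `sw ∈ I`. -/
def SA (I : Set W) (s : B) (w : W) : Prop :=
  cs.length w < cs.length (cs.simple s * w) ∧ cs.simple s * w ∈ I

/-- Strong descent: `sw < w`. -/
def SD (s : B) (w : W) : Prop := cs.length (cs.simple s * w) < cs.length w

/-- Weak ascent: `sw > w` and `sw ∈ D_J \ I`. -/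
def WA (I : Set W) (J : Set B) (s : B) (w : W) : Prop :=
  cs.length w < cs.length (cs.simple s * w) ∧ cs.simple s * w ∈ DD cs J \ I

/-- Weak descent: `sw > w` and `sw ∉ D_J`. -/
def WD (J : Set B) (s : B) (w : W) : Prop :=
  cs.length w < cs.length (cs.simple s * w) ∧ cs.simple s * w ∉ DD cs J

/-- Descents: strong or weak. -/
def Desc (J : Set B) (s : B) (w : W) : Prop := SD cs s w ∨ WD cs J s w

/-- Ascents: strong or weak. -/
def Asc (I : Set W) (J : Set B) (s : B) (w : W) : Prop := SA cs I s w ∨ WA cs I J s w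

/-- The data making the ideal `I` (of the left weak order, contained in `D_J`) a
`W`-graph ideal with respect to `J`: an `H(W)`-module (a module together with operators
`T s` satisfying the quadratic and braid relations of the Hecke algebra) which is free
over `A` with basis indexed by `I`, on which the generators act by the four-case formula
of Definition 5.2, together with a compatible semilinear bar involution fixing `b₁`. -/
structure WGModule (I : Set W) (J : Set B) where
  V : Type
  [acg : AddCommGroup V]
  [mod : Module A V]
  ideal : IsIdealWk cs I
  subset : I ⊆ DD cs J
  one_mem : (1 : W) ∈ I
  bas : Module.Basis I A V
  T : B → V →ₗ[A] V
  quad : ∀ s : B, (T s) ∘ₗ (T s) = LinearMap.id + (Q - Qi) • T s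
  braid : ∀ s t : B,
    ((CoxeterSystem.alternatingWord s t (M s t)).map fun i => (T i : Module.End A V)).prod =
    ((CoxeterSystem.alternatingWord t s (M s t)).map fun i => (T i : Module.End A V)).prod
  /-- the polynomials `r^s_{y,w}` (divided by `q`, as elements of `ℤ[q]` with zero constant
  term they are recorded in `qℤ[q]` via `r_const`); `r s w y` is `r^s_{y,w}`. -/
  r : B → I → (I →₀ Polynomial ℤ)
  r_const : ∀ (s : B) (w y : I), ((r s w) y).coeff 0 = 0
  r_supp : ∀ (s : B) (w y : I), (r s w) y ≠ 0 → BrLt cs (y : W) (cs.simple s * (w : W))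
  act_SA : ∀ (s : B) (w : I) (h : SA cs I s (w : W)),
    T s (bas w) = bas ⟨cs.simple s * (w : W), h.2⟩
  act_SD : ∀ (s : B) (w : I), SD cs s (w : W) → ∀ h' : cs.simple s * (w : W) ∈ I,
    T s (bas w) = bas ⟨cs.simple s * (w : W), h'⟩ + (Q - Qi) • bas w
  act_WD : ∀ (s : B) (w : I), WD cs J s (w : W) → T s (bas w) = -Qi • bas w
  act_WA : ∀ (s : B) (w : I), WA cs I J s (w : W) →
    T s (bas w) = Q • bas w - (r s w).sum fun y p => (Polynomial.toLaurent p) • bas y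
  bar : V → V
  bar_add : ∀ x y : V, bar (x + y) = bar x + bar y
  bar_smul : ∀ (a : A) (x : V), bar (a • x) = (LaurentPolynomial.invert a) • bar x
  bar_one : bar (bas ⟨(1 : W), one_mem⟩) = bas ⟨(1 : W), one_mem⟩
  bar_T : ∀ (s : B) (x : V), bar (T s x) = T s (bar x) - (Q - Qi) • bar x

attribute [instance] WGModule.acg WGModule.mod

/-- `I` is a `W`-graph ideal with respect to `J`. -/
def IsWGraphIdeal (I : Set W) (J : Set B) : Prop := Nonempty (WGModule cs I J)


open scoped Classical

instance : CoeFun A (fun _ => ℤ → ℤ) := ⟨fun a => ⇑a.coeff⟩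

instance : Coe A (ℤ →₀ ℤ) := ⟨fun a => a.coeff⟩


/-! ### Auxiliary lemmas on Laurent polynomial coefficients -/

section LaurentAux

/-- The coefficients of `a` vanish strictly below `n`. -/
def GeD (n : ℤ) (a : A) : Prop := ∀ k : ℤ, k < n → a k = 0

lemma GeD.zero (n : ℤ) : GeD n (0 : A) := fun _ _ => rfl

lemma GeD.mono {m n : ℤ} {a : A} (h : m ≤ n) (ha : GeD n a) : GeD m a :=
  fun k hk => ha k (lt_of_lt_of_le hk h)

lemma GeD.add {n : ℤ} {a b : A} (ha : GeD n a) (hb : GeD n b) : GeD n (a + b) := by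
  intro k hk
  have : (a + b) k = a k + b k := rfl
  rw [this, ha k hk, hb k hk, add_zero]

lemma GeD.neg {n : ℤ} {a : A} (ha : GeD n a) : GeD n (-a) := by
  intro k hk
  have : (-a) k = -(a k) := rfl
  rw [this, ha k hk, neg_zero]

lemma GeD.sub {n : ℤ} {a b : A} (ha : GeD n a) (hb : GeD n b) : GeD n (a - b) := by
  rw [sub_eq_add_neg]; exact ha.add hb.neg

lemma GeD.finsetSum {n : ℤ} {ι : Type*} {t : Finset ι} {f : ι → A}
    (h : ∀ i ∈ t, GeD n (f i)) : GeD n (∑ i ∈ t, f i) := by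
  classical
  induction t using Finset.induction_on with
  | empty => simpa using GeD.zero n
  | insert x t' hx ih =>
    rw [Finset.sum_insert hx]
    exact (h x (Finset.mem_insert_self x t')).add
      (ih fun i hi => h i (Finset.mem_insert_of_mem hi))

lemma GeD.mul {m n : ℤ} {a b : A} (ha : GeD m a) (hb : GeD n b) : GeD (m + n) (a * b) := by
  intro k hk
  rw [AddMonoidAlgebra.mul_apply, Finsupp.sum]
  apply Finset.sum_eq_zero
  intro i hi0
  rw [Finsupp.sum]
  apply Finset.sum_eq_zero
  intro j hj0
  have hi : m ≤ i := by
    by_contra h'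
    exact (Finsupp.mem_support_iff.mp hi0) (ha i (by omega))
  have hj : n ≤ j := by
    by_contra h'
    exact (Finsupp.mem_support_iff.mp hj0) (hb j (by omega))
  have : ¬ (i + j = k) := by omega
  simp [this]

lemma Q_apply (k : ℤ) : (Q : A) k = if (1 : ℤ) = k then 1 else 0 :=
  LaurentPolynomial.T_apply k 1

lemma Qi_apply (k : ℤ) : (Qi : A) k = if (-1 : ℤ) = k then 1 else 0 :=
  LaurentPolynomial.T_apply k (-1)

lemma GeD_Q : GeD 1 (Q : A) := by
  intro k hk
  rw [Q_apply]
  have : ¬ ((1:ℤ) = k) := by omega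
  simp [this]

lemma T_mul_apply (n : ℤ) (a : A) (k : ℤ) :
    ((LaurentPolynomial.T n * a : A) : ℤ →₀ ℤ) k = a (k - n) := by
  have h1 : (LaurentPolynomial.T n : A) = AddMonoidAlgebra.single n 1 := rfl
  rw [h1]
  have h2 := AddMonoidAlgebra.coeff_single_mul_apply a (1 : ℤ) n k
  rw [h2, one_mul]
  congr 1
  omega

lemma Q_mul_apply (a : A) (k : ℤ) : ((Q * a : A) : ℤ →₀ ℤ) k = a (k - 1) := T_mul_apply 1 a k

lemma Qi_mul_apply (a : A) (k : ℤ) : ((Qi * a : A) : ℤ →₀ ℤ) k = a (k + 1) := by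
  have h1 := T_mul_apply (-1) a k
  rw [Qi]
  rw [h1]
  norm_num

lemma GeD.q_mul {n : ℤ} {a : A} (ha : GeD n a) : GeD (n + 1) (Q * a) := by
  intro k hk
  rw [Q_mul_apply]
  exact ha _ (by omega)

lemma GeD.qi_mul {n : ℤ} {a : A} (ha : GeD n a) : GeD (n - 1) (Qi * a) := by
  intro k hk
  rw [Qi_mul_apply]
  exact ha _ (by omega)

lemma intCast_apply (n : ℤ) (k : ℤ) : ((n : ℤ) : A) k = if k = 0 then n else 0 := by
  have h1 : ((n : ℤ) : A) = LaurentPolynomial.C n := (map_intCast (LaurentPolynomial.C (R := ℤ)) n).symm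
  have h2 : (LaurentPolynomial.C n : A) = AddMonoidAlgebra.single 0 n := (LaurentPolynomial.single_eq_C n).symm
  rw [h1, h2, AddMonoidAlgebra.coeff_single_apply]
  simp [eq_comm]

lemma tl_apply (p : Polynomial ℤ) (k : ℤ) :
    (Polynomial.toLaurent p) k = if 0 ≤ k then p.coeff k.toNat else 0 := by
  have e : (Polynomial.toLaurent p).coeff = Finsupp.mapDomain (Nat.cast : ℕ → ℤ) p.toFinsupp.coeff := rfl
  rw [e]
  by_cases hk : 0 ≤ k
  · lift k to ℕ using hk with n
    rw [Finsupp.mapDomain_apply Nat.cast_injective]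
    simp [Polynomial.coeff]
  · rw [Finsupp.mapDomain_notin_range]
    · simp [hk]
    · rintro ⟨m, rfl⟩
      exact hk (Int.natCast_nonneg m)

lemma GeD_toLaurent (p : Polynomial ℤ) : GeD 0 (Polynomial.toLaurent p) := by
  intro k hk
  rw [tl_apply]
  simp [not_le.mpr hk]

lemma GeD_toLaurent_of_coeff_zero {p : Polynomial ℤ} (h : p.coeff 0 = 0) :
    GeD 1 (Polynomial.toLaurent p) := by
  intro k hk
  rw [tl_apply]
  by_cases h0 : 0 ≤ k
  · have : k = 0 := by omega
    subst this
    simpa using h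
  · simp [h0]

lemma tl_apply_zero (p : Polynomial ℤ) : (Polynomial.toLaurent p) 0 = p.coeff 0 := by
  rw [tl_apply]; simp

lemma tl_apply_one (p : Polynomial ℤ) : (Polynomial.toLaurent p) 1 = p.coeff 1 := by
  rw [tl_apply]; norm_num

lemma invert_fix {a : A} (ha : GeD 1 a) (h : LaurentPolynomial.invert a = a) : a = 0 := by
  ext k
  have happ : ∀ j : ℤ, a (-j) = a j := by
    intro j
    conv_rhs => rw [← h]
    exact (LaurentPolynomial.invert_apply a j).symm
  rcases lt_or_ge k 1 with hk | hk
  · exact ha k hk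
  · rw [← happ k]
    exact ha _ (by omega)

lemma intCast_GeD {n : ℤ} (h : GeD 1 ((n : ℤ) : A)) : n = 0 := by
  have := h 0 (by norm_num)
  rwa [intCast_apply, if_pos rfl] at this

lemma GeD_intCast_zero (n : ℤ) : GeD 1 (((0:ℤ) : A)) := by
  intro k _; simp

/-- If `f ∈ qℤ[q]` and `(q + q⁻¹) f` is an integer constant, then both vanish. -/
lemma lemB {f : A} {n : ℤ} (hf : GeD 1 f) (h : (Q + Qi) * f = ((n : ℤ) : A)) :
    f = 0 ∧ n = 0 := by
  have hf0 : f = 0 := by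
    by_contra hne
    have hsupp : f.coeff.support.Nonempty :=
      Finsupp.support_nonempty_iff.mpr (mt AddMonoidAlgebra.coeff_eq_zero.mp hne)
    set d := f.coeff.support.max' hsupp with hd
    have hdmem : d ∈ f.coeff.support := f.coeff.support.max'_mem hsupp
    have hd1 : 1 ≤ d := by
      by_contra h'
      exact (Finsupp.mem_support_iff.mp hdmem) (hf d (by omega))
    have key : ((Q + Qi) * f : A) (d + 1) = (((n : ℤ) : A) : ℤ →₀ ℤ) (d + 1) := by rw [h]
    have hL : ((Q + Qi) * f : A) (d + 1) = f d + f (d + 2) := by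
      have e0 : ((Q + Qi) * f : A) = Q * f + Qi * f := add_mul Q Qi f
      rw [e0]
      rw [AddMonoidAlgebra.coeff_add, Finsupp.add_apply, Q_mul_apply, Qi_mul_apply]
      have e1 : d + 1 - 1 = d := by ring
      have e2 : d + 1 + 1 = d + 2 := by ring
      rw [e1, e2]
    have hup : f (d + 2) = 0 := by
      by_contra h'
      have : d + 2 ∈ f.coeff.support := Finsupp.mem_support_iff.mpr h'
      have := f.coeff.support.le_max' _ this
      omega
    have hR : (((n : ℤ) : A) : ℤ →₀ ℤ) (d + 1) = 0 := by
      rw [intCast_apply]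
      have : ¬ (d + 1 = 0) := by omega
      simp [this]
    rw [hL, hup, add_zero, hR] at key
    exact (Finsupp.mem_support_iff.mp hdmem) key
  refine ⟨hf0, ?_⟩
  rw [hf0, mul_zero] at h
  have h0 : (((n : ℤ) : A) : ℤ →₀ ℤ) 0 = (0 : A) 0 := by rw [h]
  rw [intCast_apply, if_pos rfl] at h0
  simpa using h0

/-- If `f ∈ q²ℤ[q]` and `(1 + q⁻²) f` is an integer constant, then both vanish. -/
lemma lemC {f : A} {n : ℤ} (hf : GeD 2 f) (h : (1 + Qi * Qi) * f = ((n : ℤ) : A)) :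
    f = 0 ∧ n = 0 := by
  have hf0 : f = 0 := by
    by_contra hne
    have hsupp : f.coeff.support.Nonempty :=
      Finsupp.support_nonempty_iff.mpr (mt AddMonoidAlgebra.coeff_eq_zero.mp hne)
    set d := f.coeff.support.max' hsupp with hd
    have hdmem : d ∈ f.coeff.support := f.coeff.support.max'_mem hsupp
    have hd1 : 2 ≤ d := by
      by_contra h'
      exact (Finsupp.mem_support_iff.mp hdmem) (hf d (by omega))
    have key : ((1 + Qi * Qi) * f : A) d = (((n : ℤ) : A) : ℤ →₀ ℤ) d := by rw [h]
    have hL : ((1 + Qi * Qi) * f : A) d = f d + f (d + 2) := by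
      have e0 : ((1 + Qi * Qi) * f : A) = f + Qi * (Qi * f) := by ring
      rw [e0]
      rw [AddMonoidAlgebra.coeff_add, Finsupp.add_apply, Qi_mul_apply, Qi_mul_apply]
      have e2 : d + 1 + 1 = d + 2 := by ring
      rw [e2]
    have hup : f (d + 2) = 0 := by
      by_contra h'
      have : d + 2 ∈ f.coeff.support := Finsupp.mem_support_iff.mpr h'
      have := f.coeff.support.le_max' _ this
      omega
    have hR : (((n : ℤ) : A) : ℤ →₀ ℤ) d = 0 := by
      rw [intCast_apply]
      have : ¬ (d = 0) := by omega
      simp [this]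
    rw [hL, hup, add_zero, hR] at key
    exact (Finsupp.mem_support_iff.mp hdmem) key
  refine ⟨hf0, ?_⟩
  rw [hf0, mul_zero] at h
  have h0 : (((n : ℤ) : A) : ℤ →₀ ℤ) 0 = (0 : A) 0 := by rw [h]
  rw [intCast_apply, if_pos rfl] at h0
  simpa using h0

lemma Qi_mul_Q : (Qi * Q : A) = 1 := by
  rw [Qi, Q, ← LaurentPolynomial.T_add]
  norm_num

lemma invert_Q : LaurentPolynomial.invert (Q : A) = Qi := by
  rw [Q, Qi, LaurentPolynomial.invert_T]

lemma invert_Qi : LaurentPolynomial.invert (Qi : A) = Q := by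
  rw [Q, Qi, LaurentPolynomial.invert_T]
  norm_num

lemma invert_intCast (n : ℤ) :
    LaurentPolynomial.invert ((n : ℤ) : A) = ((n : ℤ) : A) := by
  exact map_intCast (LaurentPolynomial.invert (R := ℤ) : A ≃+* A) n

end LaurentAux

/-! ### Bruhat order basics -/

section BruhatAux

variable {B W : Type} [Group W] {M : CoxeterMatrix B} {cs : CoxeterSystem M W}

lemma brle_length {u w : W} (h : BrLe cs u w) : cs.length u ≤ cs.length w := by
  induction h with
  | refl => exact le_refl _
  | tail _ hstep ih => exact le_trans ih hstep.1

lemma brle_eq_of_length_eq {u w : W} (h : BrLe cs u w)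
    (hl : cs.length u = cs.length w) : u = w := by
  induction h with
  | refl => rfl
  | @tail z w' hle hstep ih =>
    have h1 : cs.length u ≤ cs.length z := brle_length hle
    have h2 : cs.length z ≤ cs.length w' := hstep.1
    have hz : cs.length z = cs.length w' := by omega
    obtain ⟨-, t, ht, rfl⟩ := hstep
    rcases ht with ht | rfl
    · exact absurd hz.symm (ht.length_mul_right_ne z)
    · rw [one_mul] at hz ⊢
      exact ih (by omega)

lemma brlt_length {u w : W} (h : BrLt cs u w) : cs.length u < cs.length w := by
  rcases h with ⟨hle, hne⟩
  have := brle_length hle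
  rcases lt_or_eq_of_le this with h' | h'
  · exact h'
  · exact absurd (brle_eq_of_length_eq hle h') hne

lemma brlt_simple_mul {s : B} {w : W}
    (h : cs.length w < cs.length (cs.simple s * w)) : BrLt cs w (cs.simple s * w) := by
  constructor
  · exact Relation.ReflTransGen.single ⟨le_of_lt h, cs.simple s,
      Or.inl (cs.isReflection_simple s), rfl⟩
  · intro heq
    rw [← heq] at h
    exact lt_irrefl _ h

lemma simple_mul_cancel {s : B} (w : W) : cs.simple s * (cs.simple s * w) = w := by
  rw [← mul_assoc, cs.simple_mul_simple_self, one_mul]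

lemma length_smul_cases (s : B) (w : W) :
    cs.length (cs.simple s * w) = cs.length w + 1 ∨
    cs.length (cs.simple s * w) + 1 = cs.length w :=
  cs.length_simple_mul w s

lemma length_smul_ne (s : B) (w : W) : cs.length (cs.simple s * w) ≠ cs.length w :=
  cs.length_simple_mul_ne w s

end BruhatAux

/-! ### Module-theoretic auxiliary lemmas -/

section ModuleAux

variable {B W : Type} [Group W] {M : CoxeterMatrix B} {cs : CoxeterSystem M W}
  {I : Set W} {J : Set B}

lemma sd_smul_mem (D : WGModule cs I J) {s : B} {w : I}
    (h : cs.length (cs.simple s * ↑w) < cs.length ↑w) : cs.simple s * ↑w ∈ I := by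
  apply D.ideal (cs.simple s * ↑w) ↑w _ w.2
  unfold WkLe
  have h1 : ((w : W) * (cs.simple s * ↑w)⁻¹) = cs.simple s := by
    rw [mul_inv_rev, mul_inv_cancel_left, cs.inv_simple]
  rw [h1, cs.length_simple]
  rcases length_smul_cases (cs := cs) s ↑w with hc | hc <;> omega

lemma status_cases (D : WGModule cs I J) (s : B) (u : I) :
    SD cs s ↑u ∨ SA cs I s ↑u ∨ WA cs I J s ↑u ∨ WD cs J s ↑u := by
  rcases length_smul_cases (cs := cs) s ↑u with hup | hdn
  · by_cases h1 : cs.simple s * ↑u ∈ I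
    · exact Or.inr (Or.inl ⟨by omega, h1⟩)
    · by_cases h2 : cs.simple s * ↑u ∈ DD cs J
      · exact Or.inr (Or.inr (Or.inl ⟨by omega, ⟨h2, h1⟩⟩))
      · exact Or.inr (Or.inr (Or.inr ⟨by omega, h2⟩))
  · exact Or.inl (show SD cs s ↑u by unfold SD; omega)

lemma sa_not_desc (D : WGModule cs I J) {s : B} {u : I} (h : SA cs I s ↑u) :
    ¬ Desc cs J s ↑u := by
  rintro (hd | hd)
  · unfold SD at hd; have := h.1; omega
  · exact hd.2 (D.subset h.2)

lemma wa_not_desc {s : B} {u : I} (h : WA cs I J s ↑u) :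
    ¬ Desc cs J s ↑u := by
  rintro (hd | hd)
  · unfold SD at hd; have := h.1; omega
  · exact hd.2 h.2.1

lemma not_desc_cases (D : WGModule cs I J) {s : B} {u : I} (h : ¬ Desc cs J s ↑u) :
    SA cs I s ↑u ∨ WA cs I J s ↑u := by
  rcases status_cases D s u with h' | h' | h' | h'
  · exact absurd (Or.inl h') h
  · exact Or.inl h'
  · exact Or.inr h'
  · exact absurd (Or.inr h') h

/-- The diagonal coefficient of `T s + q⁻¹` on the standard basis. -/
def cSt (cs : CoxeterSystem M W) (I : Set W) (J : Set B) (s : B) (v : I) : A :=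
  if SD cs s ↑v then Q else if cs.simple s * ↑v ∈ I then Qi
  else if cs.simple s * ↑v ∈ DD cs J then Q + Qi else 0

/-- The vector `Σ_y r^s_{y,u} b_y`. -/
def Rvec (D : WGModule cs I J) (s : B) (u : I) : D.V :=
  (D.r s u).sum fun y p => (Polynomial.toLaurent p) • D.bas y

/-- The weak-ascent correction term in the coordinates of `(T s + q⁻¹) x`. -/
def waSum (D : WGModule cs I J) (s : B) (m : I →₀ A) (v : I) : A :=
  ∑ u ∈ m.support.filter (fun u : I => WA cs I J s ↑u),
    m u * Polynomial.toLaurent ((D.r s u) v)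

lemma theta_bas (D : WGModule cs I J) (s : B) (u : I) :
    D.T s (D.bas u) + Qi • D.bas u =
      (if h : cs.simple s * ↑u ∈ I then D.bas ⟨cs.simple s * ↑u, h⟩ else 0)
      + cSt cs I J s u • D.bas u
      - (if WA cs I J s ↑u then Rvec D s u else 0) := by
  rcases status_cases D s u with hsd | hsa | hwa | hwd
  · have hlt : cs.length (cs.simple s * ↑u) < cs.length ↑u := hsd
    have hmem := sd_smul_mem D hlt
    have hnwa : ¬ WA cs I J s ↑u := fun hwa => by have := hwa.1; omega
    rw [D.act_SD s u hsd hmem, dif_pos hmem, cSt, if_pos hsd, if_neg hnwa]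
    module
  · have hnsd : ¬ SD cs s ↑u := by unfold SD; have := hsa.1; omega
    have hnwa : ¬ WA cs I J s ↑u := fun hwa => hwa.2.2 hsa.2
    rw [D.act_SA s u hsa, dif_pos hsa.2, cSt, if_neg hnsd, if_pos hsa.2, if_neg hnwa]
    module
  · have hnsd : ¬ SD cs s ↑u := by unfold SD; have := hwa.1; omega
    have hnm : cs.simple s * ↑u ∉ I := hwa.2.2
    rw [D.act_WA s u hwa, dif_neg hnm, cSt, if_neg hnsd, if_neg hnm, if_pos hwa.2.1,
      if_pos hwa, Rvec]
    module
  · have hnsd : ¬ SD cs s ↑u := by unfold SD; have := hwd.1; omega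
    have hnm : cs.simple s * ↑u ∉ I := fun hmem => hwd.2 (D.subset hmem)
    have hnwa : ¬ WA cs I J s ↑u := fun hwa => hwd.2 hwa.2.1
    rw [D.act_WD s u hwd, dif_neg hnm, cSt, if_neg hnsd, if_neg hnm, if_neg hwd.2, if_neg hnwa]
    module

lemma repr_Rvec (D : WGModule cs I J) (s : B) (u v : I) :
    D.bas.repr (Rvec D s u) v = Polynomial.toLaurent ((D.r s u) v) := by
  classical
  rw [Rvec, Finsupp.sum, map_sum, Finsupp.finset_sum_apply]
  have h0 : ∀ y ∈ (D.r s u).support, y ≠ v →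
      (D.bas.repr ((Polynomial.toLaurent ((D.r s u) y)) • D.bas y)) v = 0 := by
    intro y _ hy
    rw [map_smul, Finsupp.smul_apply, D.bas.repr_self, smul_eq_mul,
      Finsupp.single_apply, if_neg hy, mul_zero]
  have h1 : v ∉ (D.r s u).support →
      (D.bas.repr ((Polynomial.toLaurent ((D.r s u) v)) • D.bas v)) v = 0 := by
    intro hv
    rw [Finsupp.notMem_support_iff.mp hv]
    simp
  rw [Finset.sum_eq_single v h0 h1, map_smul, Finsupp.smul_apply, D.bas.repr_self,
    smul_eq_mul, Finsupp.single_apply, if_pos rfl, mul_one]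

/-- The master formula for the coordinates of `(T s + q⁻¹) x`. -/
lemma master (D : WGModule cs I J) (s : B) (x : D.V) (v : I) :
    D.bas.repr (D.T s x + Qi • x) v =
      (if h : cs.simple s * ↑v ∈ I then D.bas.repr x ⟨cs.simple s * ↑v, h⟩ else 0)
      + cSt cs I J s v * D.bas.repr x v
      - waSum D s (D.bas.repr x) v := by
  classical
  set m := D.bas.repr x with hm
  have hx : x = ∑ u ∈ m.support, m u • D.bas u := by
    conv_lhs => rw [← D.bas.linearCombination_repr x]
    rw [Finsupp.linearCombination_apply, Finsupp.sum]
  have hTh : D.T s x + Qi • x = ∑ u ∈ m.support, m u • (D.T s (D.bas u) + Qi • D.bas u) := by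
    conv_lhs => rw [hx]
    rw [map_sum, Finset.smul_sum, ← Finset.sum_add_distrib]
    apply Finset.sum_congr rfl
    intro u _
    rw [map_smul, smul_comm Qi (m u) (D.bas u), ← smul_add]
  rw [hTh]
  have hterm : ∀ u ∈ m.support,
      (D.bas.repr (m u • (D.T s (D.bas u) + Qi • D.bas u))) v
      = m u * (if h : cs.simple s * ↑u ∈ I then
            (if (⟨cs.simple s * ↑u, h⟩ : I) = v then 1 else 0) else 0)
        + m u * (cSt cs I J s u * (if u = v then 1 else 0))
        - m u * (if WA cs I J s ↑u then Polynomial.toLaurent ((D.r s u) v) else 0) := by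
    intro u _
    rw [theta_bas D s u, map_smul, Finsupp.smul_apply, smul_eq_mul, map_sub, map_add,
      Finsupp.sub_apply, Finsupp.add_apply]
    rw [apply_dite (fun z => (D.bas.repr z) v), apply_ite (fun z => (D.bas.repr z) v)]
    rw [map_smul, Finsupp.smul_apply, smul_eq_mul, D.bas.repr_self, Finsupp.single_apply]
    rw [repr_Rvec]
    simp only [map_zero, Finsupp.coe_zero, Pi.zero_apply]
    have hd : (if h : cs.simple s * ↑u ∈ I then
        (D.bas.repr (D.bas (⟨cs.simple s * ↑u, h⟩ : I))) v else 0)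
        = (if h : cs.simple s * ↑u ∈ I then
            (if (⟨cs.simple s * ↑u, h⟩ : I) = v then 1 else 0) else 0) := by
      by_cases h : cs.simple s * ↑u ∈ I
      · rw [dif_pos h, dif_pos h, D.bas.repr_self, Finsupp.single_apply]
      · rw [dif_neg h, dif_neg h]
    rw [hd]
    ring
  rw [map_sum, Finsupp.finset_sum_apply, Finset.sum_congr rfl hterm,
    Finset.sum_sub_distrib, Finset.sum_add_distrib]
  have hS1 : (∑ u ∈ m.support, m u * (if h : cs.simple s * ↑u ∈ I then
      (if (⟨cs.simple s * ↑u, h⟩ : I) = v then 1 else 0) else 0))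
      = (if h : cs.simple s * ↑v ∈ I then m ⟨cs.simple s * ↑v, h⟩ else 0) := by
    by_cases hv : cs.simple s * ↑v ∈ I
    · rw [dif_pos hv]
      have hself : cs.simple s * ((cs.simple s * ↑v : W)) ∈ I := by
        rw [simple_mul_cancel]; exact v.2
      have h0 : ∀ u ∈ m.support, u ≠ (⟨cs.simple s * ↑v, hv⟩ : I) →
          m u * (if h : cs.simple s * ↑u ∈ I then
            (if (⟨cs.simple s * ↑u, h⟩ : I) = v then 1 else 0) else 0) = 0 := by
        intro u _ hu
        by_cases h : cs.simple s * ↑u ∈ I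
        · rw [dif_pos h]
          have : ¬ ((⟨cs.simple s * ↑u, h⟩ : I) = v) := by
            intro heq
            apply hu
            apply Subtype.ext
            have hv' : (v : W) = cs.simple s * ↑u := by rw [← heq]
            show (u : W) = cs.simple s * ↑v
            rw [hv', simple_mul_cancel]
          rw [if_neg this, mul_zero]
        · rw [dif_neg h, mul_zero]
      have h1 : (⟨cs.simple s * ↑v, hv⟩ : I) ∉ m.support →
          m (⟨cs.simple s * ↑v, hv⟩ : I) * (if h : cs.simple s * (cs.simple s * ↑v) ∈ I then
            (if (⟨cs.simple s * (cs.simple s * ↑v), h⟩ : I) = v then 1 else 0) else 0) = 0 := by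
        intro hnm
        rw [Finsupp.notMem_support_iff.mp hnm, zero_mul]
      rw [Finset.sum_eq_single _ h0 h1, dif_pos hself]
      have : (⟨cs.simple s * (cs.simple s * ↑v), hself⟩ : I) = v := by
        apply Subtype.ext
        show cs.simple s * (cs.simple s * (v : W)) = (v : W)
        exact simple_mul_cancel _
      rw [if_pos this, mul_one]
    · rw [dif_neg hv]
      apply Finset.sum_eq_zero
      intro u _
      by_cases h : cs.simple s * ↑u ∈ I
      · rw [dif_pos h]
        have : ¬ ((⟨cs.simple s * ↑u, h⟩ : I) = v) := by
          intro heq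
          apply hv
          have hv' : (v : W) = cs.simple s * ↑u := by rw [← heq]
          rw [hv', simple_mul_cancel]
          exact u.2
        rw [if_neg this, mul_zero]
      · rw [dif_neg h, mul_zero]
  have hS2 : (∑ u ∈ m.support, m u * (cSt cs I J s u * (if u = v then 1 else 0)))
      = cSt cs I J s v * m v := by
    have h0 : ∀ u ∈ m.support, u ≠ v →
        m u * (cSt cs I J s u * (if u = v then 1 else 0)) = 0 := by
      intro u _ hu
      rw [if_neg hu, mul_zero, mul_zero]
    have h1 : v ∉ m.support → m v * (cSt cs I J s v * (if v = v then 1 else 0)) = 0 := by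
      intro hnm
      rw [Finsupp.notMem_support_iff.mp hnm, zero_mul]
    rw [Finset.sum_eq_single _ h0 h1, if_pos rfl, mul_one, mul_comm]
  have hS3 : (∑ u ∈ m.support,
      m u * (if WA cs I J s ↑u then Polynomial.toLaurent ((D.r s u) v) else 0))
      = waSum D s m v := by
    rw [waSum, Finset.sum_filter]
    apply Finset.sum_congr rfl
    intro u _
    by_cases h : WA cs I J s ↑u
    · rw [if_pos h, if_pos h]
    · rw [if_neg h, if_neg h, mul_zero]
  rw [hS1, hS2, hS3]

lemma bar_zero (D : WGModule cs I J) : D.bar 0 = 0 := by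
  have h := D.bar_add 0 0
  rw [add_zero] at h
  exact (add_left_cancel (h.symm.trans (add_zero _).symm))

lemma bar_neg (D : WGModule cs I J) (x : D.V) : D.bar (-x) = - D.bar x := by
  have h : (-x) = ((-1 : A)) • x := by module
  rw [h, D.bar_smul]
  have h2 : LaurentPolynomial.invert ((-1 : A)) = -1 := by
    rw [map_neg, map_one]
  rw [h2]
  module

lemma bar_sub (D : WGModule cs I J) (x y : D.V) : D.bar (x - y) = D.bar x - D.bar y := by
  rw [sub_eq_add_neg, D.bar_add, bar_neg, sub_eq_add_neg]

lemma bar_finset_sum (D : WGModule cs I J) {ι : Type*} (t : Finset ι) (f : ι → D.V) :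
    D.bar (∑ i ∈ t, f i) = ∑ i ∈ t, D.bar (f i) := by
  classical
  induction t using Finset.induction_on with
  | empty => simpa using bar_zero D
  | @insert x t' hx ih => rw [Finset.sum_insert hx, D.bar_add, ih, Finset.sum_insert hx]

end ModuleAux

section ReprAux

variable {B W : Type} [Group W] {M : CoxeterMatrix B} {cs : CoxeterSystem M W}
  {I : Set W} {J : Set B} {D : WGModule cs I J} {c : I → D.V} {qp : I → I →₀ Polynomial ℤ}

lemma c_expand
    (htrans : ∀ w : I, D.bas w = c w + (qp w).sum fun y p => (Q * Polynomial.toLaurent p) • c y)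
    (y v : I) :
    D.bas.repr (c y) v = (if y = v then 1 else 0)
      - ∑ y' ∈ (qp y).support,
          (Q * Polynomial.toLaurent ((qp y) y')) * D.bas.repr (c y') v := by
  have h2 : c y = D.bas y - (qp y).sum fun y' p => (Q * Polynomial.toLaurent p) • c y' := by
    rw [htrans y]; abel
  rw [h2, map_sub, Finsupp.sub_apply, D.bas.repr_self, Finsupp.single_apply]
  congr 1
  rw [Finsupp.sum, map_sum, Finsupp.finset_sum_apply]
  apply Finset.sum_congr rfl
  intro y' _
  rw [map_smul, Finsupp.smul_apply, smul_eq_mul]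

lemma c_repr_aux
    (hsupp : ∀ w y : I, qp w y ≠ 0 → BrLt cs (y : W) (w : W))
    (htrans : ∀ w : I, D.bas w = c w + (qp w).sum fun y p => (Q * Polynomial.toLaurent p) • c y) :
    ∀ (n : ℕ) (y : I), cs.length ↑y = n →
      D.bas.repr (c y) y = 1 ∧
      ∀ v : I, v ≠ y → (GeD 1 (D.bas.repr (c y) v) ∧
        (cs.length ↑y ≤ cs.length ↑v → D.bas.repr (c y) v = 0)) := by
  intro n
  induction n using Nat.strong_induction_on with
  | _ n ih =>
    intro y hy
    have hlen : ∀ y' ∈ (qp y).support, cs.length ↑y' < n := by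
      intro y' hy'
      have h1 := hsupp y y' (Finsupp.mem_support_iff.mp hy')
      have h2 := brlt_length h1
      omega
    constructor
    · rw [c_expand htrans, if_pos rfl]
      have hz : ∀ y' ∈ (qp y).support,
          (Q * Polynomial.toLaurent ((qp y) y')) * D.bas.repr (c y') y = 0 := by
        intro y' hy'
        have hl := hlen y' hy'
        have hne : y ≠ y' := by intro h; rw [h] at hy; omega
        have h0 := ((ih _ hl y' rfl).2 y hne).2 (by omega)
        rw [h0, mul_zero]
      rw [Finset.sum_eq_zero hz, sub_zero]
    · intro v hv
      constructor
      · rw [c_expand htrans, if_neg (fun h => hv h.symm)]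
        apply GeD.sub (GeD.zero 1)
        apply GeD.finsetSum
        intro y' hy'
        have hl := hlen y' hy'
        by_cases hcase : y' = v
        · subst hcase
          rw [(ih _ hl y' rfl).1, mul_one]
          have h1 := GeD.mul GeD_Q (GeD_toLaurent ((qp y) y'))
          exact GeD.mono (by norm_num) h1
        · have h1 := ((ih _ hl y' rfl).2 v (fun h => hcase h.symm)).1
          have h2 := GeD.mul (GeD.mul GeD_Q (GeD_toLaurent ((qp y) y'))) h1
          exact GeD.mono (by norm_num) h2
      · intro hle
        rw [c_expand htrans, if_neg (fun h => hv h.symm)]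
        have hz : ∀ y' ∈ (qp y).support,
            (Q * Polynomial.toLaurent ((qp y) y')) * D.bas.repr (c y') v = 0 := by
          intro y' hy'
          have hl := hlen y' hy'
          have hne : v ≠ y' := by
            intro h
            rw [h] at hle
            omega
          have h0 := ((ih _ hl y' rfl).2 v hne).2 (by omega)
          rw [h0, mul_zero]
        rw [Finset.sum_eq_zero hz, sub_zero]

lemma c_repr_self
    (hsupp : ∀ w y : I, qp w y ≠ 0 → BrLt cs (y : W) (w : W))
    (htrans : ∀ w : I, D.bas w = c w + (qp w).sum fun y p => (Q * Polynomial.toLaurent p) • c y)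
    (y : I) : D.bas.repr (c y) y = 1 :=
  (c_repr_aux hsupp htrans _ y rfl).1

lemma c_repr_ge1
    (hsupp : ∀ w y : I, qp w y ≠ 0 → BrLt cs (y : W) (w : W))
    (htrans : ∀ w : I, D.bas w = c w + (qp w).sum fun y p => (Q * Polynomial.toLaurent p) • c y)
    {y v : I} (h : v ≠ y) : GeD 1 (D.bas.repr (c y) v) :=
  ((c_repr_aux hsupp htrans _ y rfl).2 v h).1

lemma c_repr_high
    (hsupp : ∀ w y : I, qp w y ≠ 0 → BrLt cs (y : W) (w : W))
    (htrans : ∀ w : I, D.bas w = c w + (qp w).sum fun y p => (Q * Polynomial.toLaurent p) • c y)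
    {y v : I} (h : v ≠ y) (hle : cs.length ↑y ≤ cs.length ↑v) : D.bas.repr (c y) v = 0 :=
  ((c_repr_aux hsupp htrans _ y rfl).2 v h).2 hle

lemma bar_bas_repr (D : WGModule cs I J) :
    ∀ (n : ℕ) (u : I), cs.length ↑u = n → ∀ (v : I), cs.length ↑u ≤ cs.length ↑v →
      D.bas.repr (D.bar (D.bas u)) v = if v = u then 1 else 0 := by
  intro n
  induction n using Nat.strong_induction_on with
  | _ n ih =>
    intro u hu v hv
    by_cases hn : n = 0
    · subst hn
      have h1 : (u : W) = 1 := cs.length_eq_zero_iff.mp hu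
      have h2 : u = (⟨(1 : W), D.one_mem⟩ : I) := Subtype.ext h1
      rw [h2, D.bar_one, D.bas.repr_self, Finsupp.single_apply]
      simp [eq_comm]
    · obtain ⟨ω, hlω, hπ⟩ := cs.exists_reduced_word ↑u
      have hlω : ω.length = n := by rw [← hu, hπ]; exact hlω.symm
      cases ω with
      | nil => rw [hπ, cs.wordProd_nil] at hu; rw [cs.length_one] at hu; omega
      | cons i ω' =>
        have hcons : (u : W) = cs.simple i * cs.wordProd ω' := by
          rw [hπ, cs.wordProd_cons]
        have hsiu : cs.simple i * ↑u = cs.wordProd ω' := by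
          rw [hcons, simple_mul_cancel]
        have hω' : ω'.length = n - 1 := by
          have : (i :: ω').length = n := hlω
          simp at this
          omega
        have hlen' : cs.length (cs.simple i * ↑u) < n := by
          rw [hsiu]
          have h3 := cs.length_wordProd_le ω'
          omega
        have hmem : cs.simple i * ↑u ∈ I := sd_smul_mem D (by omega)
        set u' : I := (⟨cs.simple i * ↑u, hmem⟩ : I) with hu'def
        have hlu' : cs.length ↑u' < n := hlen'
        have hcanc : cs.simple i * ↑u' = ↑u := simple_mul_cancel _
        have hsa : SA cs I i ↑u' := by
          constructor
          · rw [hcanc]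
            show cs.length (cs.simple i * ↑u) < cs.length ↑u
            omega
          · rw [hcanc]; exact u.2
        have hact : D.T i (D.bas u') = D.bas u := by
          rw [D.act_SA i u' hsa]
          congr 1
          exact Subtype.ext hcanc
        have hbar : D.bar (D.bas u) = D.T i (D.bar (D.bas u')) - (Q - Qi) • D.bar (D.bas u') := by
          rw [← hact, D.bar_T]
        set xb := D.bar (D.bas u') with hxb
        have hih : ∀ z : I, cs.length ↑u' ≤ cs.length ↑z →
            D.bas.repr xb z = if z = u' then 1 else 0 := fun z hz => ih _ hlu' u' rfl z hz
        have hsupp_x : ∀ z : I, D.bas.repr xb z ≠ 0 → cs.length ↑z ≤ cs.length ↑u' := by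
          intro z hz
          by_contra hgt
          push_neg at hgt
          have h4 := hih z (le_of_lt hgt)
          have hne : z ≠ u' := by
            intro h
            rw [h] at hgt
            omega
          rw [h4, if_neg hne] at hz
          exact hz rfl
        have hreprx_v : D.bas.repr xb v = 0 := by
          have h5 : cs.length ↑u' ≤ cs.length ↑v := by omega
          rw [hih v h5, if_neg]
          intro h
          have : cs.length ↑v = cs.length ↑u' := by rw [h]
          omega
        have hTv : D.bas.repr (D.T i xb) v = if v = u then 1 else 0 := by
          have hsplit : D.bas.repr (D.T i xb) v
              = D.bas.repr (D.T i xb + Qi • xb) v - Qi * D.bas.repr xb v := by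
            rw [map_add, Finsupp.add_apply, map_smul, Finsupp.smul_apply, smul_eq_mul]
            ring
          rw [hsplit, hreprx_v, mul_zero, sub_zero, master D i xb v, hreprx_v, mul_zero,
            add_zero]
          have hwa0 : waSum D i (D.bas.repr xb) v = 0 := by
            rw [waSum]
            apply Finset.sum_eq_zero
            intro z hz
            rw [Finset.mem_filter] at hz
            have hz1 : D.bas.repr xb z ≠ 0 := Finsupp.mem_support_iff.mp hz.1
            have hz2 := hsupp_x z hz1
            have hr0 : (D.r i z) v = 0 := by
              by_contra hr
              have h6 := brlt_length (D.r_supp i z v hr)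
              have h7 := length_smul_cases (cs := cs) i ↑z
              omega
            rw [hr0]
            simp
          rw [hwa0, sub_zero]
          by_cases hpv : cs.simple i * ↑v ∈ I
          · rw [dif_pos hpv]
            have hlz : cs.length ↑u' ≤ cs.length ((⟨cs.simple i * ↑v, hpv⟩ : I) : W) := by
              show cs.length ↑u' ≤ cs.length (cs.simple i * ↑v)
              have h8 := length_smul_cases (cs := cs) i ↑v
              omega
            rw [hih _ hlz]
            by_cases hvu : v = u
            · rw [if_pos, if_pos hvu]
              apply Subtype.ext
              show cs.simple i * ↑v = ↑u'
              rw [hvu]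
            · rw [if_neg, if_neg hvu]
              intro hzeq
              apply hvu
              have h9 : cs.simple i * ↑v = cs.simple i * ↑u := congrArg Subtype.val hzeq
              exact Subtype.ext (mul_left_cancel h9)
          · rw [dif_neg hpv]
            have hvu : v ≠ u := by
              intro h
              apply hpv
              rw [h]
              exact hmem
            rw [if_neg hvu]
        rw [hbar, map_sub, Finsupp.sub_apply, map_smul, Finsupp.smul_apply, smul_eq_mul,
          hreprx_v, mul_zero, sub_zero, hTv]

/-- A bar-fixed element all of whose coordinates lie in `qℤ[q]` is zero. -/
lemma bar_fixed_eq_zero (D : WGModule cs I J) {x : D.V}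
    (hbar : D.bar x = x) (hge : ∀ v : I, GeD 1 (D.bas.repr x v)) : x = 0 := by
  by_contra hx
  have hrepr : D.bas.repr x ≠ 0 := by
    intro h
    exact hx (by simpa using congrArg (D.bas.repr.symm) h)
  have hne : (D.bas.repr x).support.Nonempty := Finsupp.support_nonempty_iff.mpr hrepr
  obtain ⟨v, hvmem, hvmax⟩ :=
    Finset.exists_max_image (D.bas.repr x).support (fun z : I => cs.length ↑z) hne
  set m := D.bas.repr x with hm
  have hxs : x = ∑ u ∈ m.support, m u • D.bas u := by
    conv_lhs => rw [← D.bas.linearCombination_repr x]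
    rw [Finsupp.linearCombination_apply, Finsupp.sum]
  have hbarx : D.bar x = ∑ u ∈ m.support, (LaurentPolynomial.invert (m u)) • D.bar (D.bas u) := by
    conv_lhs => rw [hxs]
    rw [bar_finset_sum]
    apply Finset.sum_congr rfl
    intro u _
    rw [D.bar_smul]
  have hval : D.bas.repr (D.bar x) v = LaurentPolynomial.invert (m v) := by
    rw [hbarx, map_sum, Finsupp.finset_sum_apply]
    have h0 : ∀ u ∈ m.support, u ≠ v →
        (D.bas.repr ((LaurentPolynomial.invert (m u)) • D.bar (D.bas u))) v = 0 := by
      intro u hu hne2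
      rw [map_smul, Finsupp.smul_apply, smul_eq_mul]
      rw [bar_bas_repr D _ u rfl v (hvmax u hu), if_neg (fun h => hne2 h.symm), mul_zero]
    have h1 : v ∉ m.support →
        (D.bas.repr ((LaurentPolynomial.invert (m v)) • D.bar (D.bas v))) v = 0 := by
      intro hv
      rw [Finsupp.notMem_support_iff.mp hv]
      simp
    rw [Finset.sum_eq_single v h0 h1, map_smul, Finsupp.smul_apply, smul_eq_mul,
      bar_bas_repr D _ v rfl v (le_refl _), if_pos rfl, mul_one]
  rw [hbar] at hval
  have hzero : m v = 0 := invert_fix (hge v) hval.symm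
  exact Finsupp.mem_support_iff.mp hvmem hzero

end ReprAux

section CoreAux

variable {B W : Type} [Group W] {M : CoxeterMatrix B} {cs : CoxeterSystem M W}
  {I : Set W} {J : Set B}

lemma GeD_one : GeD 0 (1 : A) := by
  intro k hk
  have h1 : (1 : A) = AddMonoidAlgebra.single 0 1 := rfl
  rw [h1, AddMonoidAlgebra.coeff_single_apply]
  have : ¬ ((0 : ℤ) = k) := by omega
  simp [this]

lemma GeD_intCast0 (n : ℤ) : GeD 0 ((n : ℤ) : A) := by
  intro k hk
  rw [intCast_apply]
  have : ¬ (k = 0) := by omega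
  simp [this]

lemma GeD_Qi : GeD (-1) (Qi : A) := by
  intro k hk
  rw [Qi_apply]
  have : ¬ ((-1 : ℤ) = k) := by omega
  simp [this]

lemma ged1_sub_const {a : A} (h : GeD 0 a) :
    GeD 1 (a - ((a 0 : ℤ) : A)) := by
  intro k hk
  rw [AddMonoidAlgebra.coeff_sub, Finsupp.sub_apply, intCast_apply]
  rcases lt_or_ge k 0 with hk0 | hk0
  · rw [h k hk0]
    have : ¬ (k = 0) := by omega
    simp [this]
  · have : k = 0 := by omega
    subst this
    simp

lemma cSt_sd {s : B} {v : I} (h : SD cs s ↑v) : cSt cs I J s v = Q := by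
  rw [cSt, if_pos h]

lemma cSt_sa {s : B} {v : I} (h : SA cs I s ↑v) : cSt cs I J s v = Qi := by
  have hnsd : ¬ SD cs s ↑v := by unfold SD; have := h.1; omega
  rw [cSt, if_neg hnsd, if_pos h.2]

lemma cSt_wa {s : B} {v : I} (h : WA cs I J s ↑v) : cSt cs I J s v = Q + Qi := by
  have hnsd : ¬ SD cs s ↑v := by unfold SD; have := h.1; omega
  rw [cSt, if_neg hnsd, if_neg h.2.2, if_pos h.2.1]

lemma cSt_wd (D : WGModule cs I J) {s : B} {v : I} (h : WD cs J s ↑v) : cSt cs I J s v = 0 := by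
  have hnsd : ¬ SD cs s ↑v := by unfold SD; have := h.1; omega
  have hnm : cs.simple s * ↑v ∉ I := fun hmem => h.2 (D.subset hmem)
  rw [cSt, if_neg hnsd, if_neg hnm, if_neg h.2]

lemma quadWA (D : WGModule cs I J) {s : B} {u : I} (hwa : WA cs I J s ↑u) :
    D.T s (Rvec D s u) + Qi • Rvec D s u = 0 := by
  have hq := congrArg (fun (f : D.V →ₗ[A] D.V) => f (D.bas u)) (D.quad s)
  simp only [LinearMap.comp_apply, LinearMap.add_apply, LinearMap.id_apply,
    LinearMap.smul_apply] at hq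
  have hact : D.T s (D.bas u) = Q • D.bas u - Rvec D s u := D.act_WA s u hwa
  rw [hact] at hq
  rw [map_sub, map_smul, hact] at hq
  have h6 : D.T s (Rvec D s u)
      = Q • (Q • D.bas u - Rvec D s u)
        - (D.bas u + (Q - Qi) • (Q • D.bas u - Rvec D s u)) := by
    rw [← hq]
    module
  have h5 : D.T s (Rvec D s u) + Qi • Rvec D s u = (Qi * Q - 1) • D.bas u := by
    rw [h6]
    module
  rw [h5, Qi_mul_Q, sub_self, zero_smul]

lemma waSum_ge (D : WGModule cs I J) (s : B) (m : I →₀ A) (v : I) {n : ℤ}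
    (hm : ∀ u ∈ m.support, WA cs I J s ↑u → GeD n (m u)) :
    GeD (n + 1) (waSum D s m v) := by
  apply GeD.finsetSum
  intro u hu
  rw [Finset.mem_filter] at hu
  exact GeD.mul (hm u hu.1 hu.2) (GeD_toLaurent_of_coeff_zero (D.r_const s u v))

/-- The key vanishing lemma for the weak-ascent corrections, via the quadratic relation. -/
lemma waSum_props (D : WGModule cs I J) (s : B) (m : I →₀ A) :
    (∀ v : I, WA cs I J s ↑v → waSum D s m v = 0) ∧
    (∀ v : I, SA cs I s ↑v → ∀ h2 : cs.simple s * ↑v ∈ I,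
        waSum D s m (⟨cs.simple s * ↑v, h2⟩ : I) + Qi * waSum D s m v = 0) := by
  classical
  set Z : D.V := ∑ u ∈ m.support.filter (fun u : I => WA cs I J s ↑u), m u • Rvec D s u with hZ
  have hZθ : D.T s Z + Qi • Z = 0 := by
    rw [hZ, map_sum, Finset.smul_sum, ← Finset.sum_add_distrib]
    apply Finset.sum_eq_zero
    intro u hu
    rw [Finset.mem_filter] at hu
    rw [map_smul, smul_comm Qi (m u), ← smul_add, quadWA D hu.2, smul_zero]
  have hZrepr : ∀ v : I, D.bas.repr Z v = waSum D s m v := by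
    intro v
    rw [hZ, map_sum, Finsupp.finset_sum_apply, waSum]
    apply Finset.sum_congr rfl
    intro u _
    rw [map_smul, Finsupp.smul_apply, smul_eq_mul, repr_Rvec]
  have hmaster : ∀ v : I,
      (if h : cs.simple s * ↑v ∈ I then D.bas.repr Z ⟨cs.simple s * ↑v, h⟩ else 0)
      + cSt cs I J s v * D.bas.repr Z v - waSum D s (D.bas.repr Z) v = 0 := by
    intro v
    rw [← master D s Z v, hZθ, map_zero]
    rfl
  have hTT : (D.bas.repr Z).support.filter (fun v : I => WA cs I J s ↑v) = ∅ := by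
    by_contra hne
    have hne' : ((D.bas.repr Z).support.filter (fun v : I => WA cs I J s ↑v)).Nonempty :=
      Finset.nonempty_of_ne_empty hne
    have hord : ∀ v : I, v ∈ (D.bas.repr Z).support.filter (fun v : I => WA cs I J s ↑v) →
        (D.bas.repr Z v).coeff.support.Nonempty := by
      intro v hv
      rw [Finset.mem_filter] at hv
      exact Finsupp.support_nonempty_iff.mpr (mt AddMonoidAlgebra.coeff_eq_zero.mp (Finsupp.mem_support_iff.mp hv.1))
    obtain ⟨v0, hv0mem, hv0min⟩ := Finset.exists_min_image
      ((D.bas.repr Z).support.filter (fun v : I => WA cs I J s ↑v))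
      (fun v : I => if h : (D.bas.repr Z v).coeff.support.Nonempty
        then (D.bas.repr Z v).coeff.support.min' h else 0) hne'
    have hv0wa : WA cs I J s ↑v0 := (Finset.mem_filter.mp hv0mem).2
    have hv0ne : (D.bas.repr Z v0).coeff.support.Nonempty := hord v0 hv0mem
    set d : ℤ := (D.bas.repr Z v0).coeff.support.min' hv0ne with hd
    have hdmem : d ∈ (D.bas.repr Z v0).coeff.support := (D.bas.repr Z v0).coeff.support.min'_mem hv0ne
    have hdne : D.bas.repr Z v0 d ≠ 0 := Finsupp.mem_support_iff.mp hdmem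
    have hlow : ∀ v : I, v ∈ (D.bas.repr Z).support.filter (fun v : I => WA cs I J s ↑v) →
        GeD d (D.bas.repr Z v) := by
      intro v hv k hk
      by_contra hne2
      have hkmem : k ∈ (D.bas.repr Z v).coeff.support := Finsupp.mem_support_iff.mpr hne2
      have h1 := (D.bas.repr Z v).coeff.support.min'_le k hkmem
      have h2 := hv0min v hv
      rw [dif_pos hv0ne, dif_pos (hord v hv)] at h2
      omega
    -- the eigen equation at v0
    have heq : (Q + Qi) * D.bas.repr Z v0 = waSum D s (D.bas.repr Z) v0 := by
      have h3 := hmaster v0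
      rw [dif_neg hv0wa.2.2, cSt_wa hv0wa, zero_add] at h3
      linear_combination h3
    -- evaluate coefficient (d - 1)
    have hL : ((Q + Qi) * D.bas.repr Z v0 : A) (d - 1) = D.bas.repr Z v0 d := by
      have e0 : ((Q + Qi) * D.bas.repr Z v0 : A)
          = Q * D.bas.repr Z v0 + Qi * D.bas.repr Z v0 := add_mul _ _ _
      rw [e0, AddMonoidAlgebra.coeff_add, Finsupp.add_apply, Q_mul_apply, Qi_mul_apply]
      have e1 : d - 1 - 1 = d - 2 := by ring
      have e2 : d - 1 + 1 = d := by ring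
      rw [e1, e2]
      have h4 : D.bas.repr Z v0 (d - 2) = 0 := hlow v0 hv0mem (d - 2) (by omega)
      rw [h4, zero_add]
    have hR : (waSum D s (D.bas.repr Z) v0 : A) (d - 1) = 0 := by
      rw [waSum]
      rw [AddMonoidAlgebra.coeff_sum, Finsupp.finset_sum_apply]
      apply Finset.sum_eq_zero
      intro z hz
      have hgz : GeD (d + 1) (D.bas.repr Z z * Polynomial.toLaurent ((D.r s z) v0)) :=
        GeD.mul (hlow z hz) (GeD_toLaurent_of_coeff_zero (D.r_const s z v0))
      exact hgz (d - 1) (by omega)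
    have h5 : D.bas.repr Z v0 d = 0 := by
      rw [← hL, heq, hR]
    exact hdne h5
  have hwa0 : ∀ v : I, WA cs I J s ↑v → waSum D s m v = 0 := by
    intro v hv
    rw [← hZrepr v]
    by_contra hne
    have : v ∈ (D.bas.repr Z).support.filter (fun v : I => WA cs I J s ↑v) := by
      rw [Finset.mem_filter]
      exact ⟨Finsupp.mem_support_iff.mpr hne, hv⟩
    rw [hTT] at this
    exact absurd this (Finset.notMem_empty v)
  have hwsz : ∀ v : I, waSum D s (D.bas.repr Z) v = 0 := by
    intro v
    rw [waSum, hTT, Finset.sum_empty]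
  constructor
  · exact hwa0
  · intro v hsa h2
    have h3 := hmaster v
    rw [dif_pos h2, cSt_sa hsa, hwsz, sub_zero] at h3
    rw [← hZrepr v, ← hZrepr ⟨cs.simple s * ↑v, h2⟩]
    linear_combination h3

end CoreAux

section DescentAux

variable {B W : Type} [Group W] {M : CoxeterMatrix B} {cs : CoxeterSystem M W}
  {I : Set W} {J : Set B} {D : WGModule cs I J} {c : I → D.V} {qp : I → I →₀ Polynomial ℤ}

theorem descent_theorem
    (hcbar : ∀ w : I, D.bar (c w) = c w)
    (hsupp : ∀ w y : I, qp w y ≠ 0 → BrLt cs (y : W) (w : W))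
    (htrans : ∀ w : I, D.bas w = c w + (qp w).sum fun y p => (Q * Polynomial.toLaurent p) • c y)
    (s : B) (w : I) (hdesc : Desc cs J s ↑w) :
    D.T s (c w) + Qi • c w = 0 := by
  classical
  set m := D.bas.repr (c w) with hm
  set E := D.T s (c w) + Qi • c w with hE
  have hm_self : m w = 1 := c_repr_self hsupp htrans w
  have hm_ge1 : ∀ v : I, v ≠ w → GeD 1 (m v) := fun v hv => c_repr_ge1 hsupp htrans hv
  have hm_ge0 : ∀ v : I, GeD 0 (m v) := by
    intro v
    by_cases hv : v = w
    · rw [hv, hm_self]; exact GeD_one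
    · exact GeD.mono (by norm_num) (hm_ge1 v hv)
  have hw_nwa : ¬ WA cs I J s ↑w := fun hwa => (wa_not_desc hwa) hdesc
  have hwa_ge1 : ∀ u ∈ m.support, WA cs I J s ↑u → GeD 1 (m u) := by
    intro u _ hu
    exact hm_ge1 u (fun h => hw_nwa (h ▸ hu))
  have hge2 : ∀ v : I, GeD 2 (waSum D s m v) := fun v => waSum_ge D s m v hwa_ge1
  have hXwa := (waSum_props D s m).1
  have hXsa := (waSum_props D s m).2
  have hN : ∀ v : I, D.bas.repr E v =
      (if h : cs.simple s * ↑v ∈ I then m ⟨cs.simple s * ↑v, h⟩ else 0)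
      + cSt cs I J s v * m v - waSum D s m v := fun v => master D s (c w) v
  have hbarE : D.bar E = E := by
    rw [hE, D.bar_add, D.bar_smul, D.bar_T, hcbar w, invert_Qi]
    module
  have hNge0 : ∀ v : I, GeD 0 (D.bas.repr E v) := by
    intro v
    rw [hN v]
    apply GeD.sub
    · apply GeD.add
      · by_cases h : cs.simple s * ↑v ∈ I
        · rw [dif_pos h]; exact hm_ge0 _
        · rw [dif_neg h]; exact GeD.zero 0
      · by_cases hv : v = w
        · subst hv
          rcases hdesc with hsd | hwd
          · rw [cSt_sd hsd, hm_self, mul_one]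
            exact GeD.mono (by norm_num) GeD_Q
          · rw [cSt_wd D hwd, zero_mul]
            exact GeD.zero 0
        · have h1 : GeD (-1) (cSt cs I J s v) := by
            rw [cSt]
            split_ifs
            · exact GeD.mono (by norm_num) GeD_Q
            · exact GeD_Qi
            · exact GeD.add (GeD.mono (by norm_num) GeD_Q) GeD_Qi
            · exact GeD.zero _
          have h2 := GeD.mul h1 (hm_ge1 v hv)
          exact GeD.mono (by norm_num) h2
    · exact GeD.mono (by norm_num) (hge2 v)
  set n : I → ℤ := fun v => (D.bas.repr E v) 0 with hn
  set S := (D.bas.repr E).support with hS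
  have hdecomp : E = ∑ v ∈ S, ((n v : ℤ) : A) • c v := by
    have hzero : E - ∑ v ∈ S, ((n v : ℤ) : A) • c v = 0 := by
      apply bar_fixed_eq_zero D
      · rw [bar_sub, hbarE, bar_finset_sum]
        congr 1
        apply Finset.sum_congr rfl
        intro v _
        rw [D.bar_smul, invert_intCast, hcbar v]
      · intro x
        rw [map_sub, Finsupp.sub_apply]
        have hsum : (D.bas.repr (∑ v ∈ S, ((n v : ℤ) : A) • c v)) x
            = ∑ v ∈ S, ((n v : ℤ) : A) * D.bas.repr (c v) x := by
          rw [map_sum, Finsupp.finset_sum_apply]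
          apply Finset.sum_congr rfl
          intro v _
          rw [map_smul, Finsupp.smul_apply, smul_eq_mul]
        rw [hsum]
        by_cases hx : x ∈ S
        · rw [← Finset.add_sum_erase S _ hx]
          have hrw : D.bas.repr E x - (((n x : ℤ) : A) * D.bas.repr (c x) x
              + ∑ v ∈ S.erase x, ((n v : ℤ) : A) * D.bas.repr (c v) x)
              = (D.bas.repr E x - ((n x : ℤ) : A))
                - ∑ v ∈ S.erase x, ((n v : ℤ) : A) * D.bas.repr (c v) x := by
            rw [c_repr_self hsupp htrans x, mul_one]
            ring
          rw [hrw]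
          apply GeD.sub
          · exact ged1_sub_const (hNge0 x)
          · apply GeD.finsetSum
            intro v hv
            have hvx : x ≠ v := fun h => (Finset.ne_of_mem_erase hv) h.symm
            have h3 := GeD.mul (GeD_intCast0 (n v)) (c_repr_ge1 hsupp htrans hvx)
            exact GeD.mono (by norm_num) h3
        · have hEx : D.bas.repr E x = 0 := by
            by_contra h
            exact hx (Finsupp.mem_support_iff.mpr h)
          rw [hEx, zero_sub]
          apply GeD.neg
          apply GeD.finsetSum
          intro v hv
          have hvx : x ≠ v := by
            intro h
            rw [← h] at hv
            exact hx hv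
          have h3 := GeD.mul (GeD_intCast0 (n v)) (c_repr_ge1 hsupp htrans hvx)
          exact GeD.mono (by norm_num) h3
    exact sub_eq_zero.mp hzero
  have hkill : ∀ v ∈ S, n v = 0 := by
    by_contra hex
    push_neg at hex
    obtain ⟨vex, hvexS, hvexne⟩ := hex
    have hBne : (S.filter (fun v : I => n v ≠ 0)).Nonempty :=
      ⟨vex, Finset.mem_filter.mpr ⟨hvexS, hvexne⟩⟩
    obtain ⟨y0, hy0mem, hy0max⟩ :=
      Finset.exists_max_image (S.filter (fun v : I => n v ≠ 0)) (fun v : I => cs.length ↑v) hBne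
    have hy0S : y0 ∈ S := (Finset.mem_filter.mp hy0mem).1
    have hy0ne : n y0 ≠ 0 := (Finset.mem_filter.mp hy0mem).2
    have hEy0 : D.bas.repr E y0 = ((n y0 : ℤ) : A) := by
      have h0 : ∀ v ∈ S, v ≠ y0 → ((n v : ℤ) : A) * D.bas.repr (c v) y0 = 0 := by
        intro v hv hne2
        by_cases hnv : n v = 0
        · rw [hnv]
          push_cast
          rw [zero_mul]
        · have hvB : v ∈ S.filter (fun v : I => n v ≠ 0) := Finset.mem_filter.mpr ⟨hv, hnv⟩
          have hlen := hy0max v hvB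
          rw [c_repr_high hsupp htrans (fun h => hne2 h.symm) hlen, mul_zero]
      have h1 : y0 ∉ S → ((n y0 : ℤ) : A) * D.bas.repr (c y0) y0 = 0 := fun h => absurd hy0S h
      conv_lhs => rw [hdecomp]
      rw [map_sum, Finsupp.finset_sum_apply]
      have hterm : ∀ v ∈ S, (D.bas.repr (((n v : ℤ) : A) • c v)) y0
          = ((n v : ℤ) : A) * D.bas.repr (c v) y0 := by
        intro v _
        rw [map_smul, Finsupp.smul_apply, smul_eq_mul]
      rw [Finset.sum_congr rfl hterm, Finset.sum_eq_single y0 h0 h1,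
        c_repr_self hsupp htrans, mul_one]
    have hydesc_ge1 : (SD cs s ↑y0 ∨ WD cs J s ↑y0) → False := by
      intro hcase
      have hge1 : GeD 1 (D.bas.repr E y0) := by
        rw [hN y0]
        rcases hcase with hsd | hwd
        · have hsvI := sd_smul_mem D hsd
          have hnw : (⟨cs.simple s * ↑y0, hsvI⟩ : I) ≠ w := by
            intro heq
            have h7 : cs.simple s * ↑y0 = ↑w := congrArg Subtype.val heq
            have h8 : cs.simple s * ↑w = ↑y0 := by rw [← h7, simple_mul_cancel]
            rcases hdesc with hsd' | hwd'
            · have hs1 : cs.length (cs.simple s * ↑y0) < cs.length ↑y0 := hsd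
              have hs2 : cs.length (cs.simple s * ↑w) < cs.length ↑w := hsd'
              rw [h8] at hs2
              rw [h7] at hs1
              omega
            · exact hwd'.2 (by rw [h8]; exact D.subset y0.2)
          rw [dif_pos hsvI, cSt_sd hsd]
          apply GeD.sub
          · apply GeD.add (hm_ge1 _ hnw)
            by_cases hyw : y0 = w
            · rw [hyw, hm_self, mul_one]; exact GeD_Q
            · exact GeD.mono (by norm_num) (GeD.mul GeD_Q (hm_ge1 y0 hyw))
          · exact GeD.mono (by norm_num) (hge2 y0)
        · have hnm : cs.simple s * ↑y0 ∉ I := fun hmem => hwd.2 (D.subset hmem)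
          rw [dif_neg hnm, cSt_wd D hwd, zero_mul, add_zero, zero_sub]
          exact GeD.neg (GeD.mono (by norm_num) (hge2 y0))
      rw [hEy0] at hge1
      exact hy0ne (intCast_GeD hge1)
    rcases status_cases D s y0 with hsd | hsa | hwa | hwd
    · exact hydesc_ge1 (Or.inl hsd)
    · -- SA case
      have hy0w : y0 ≠ w := fun h => (sa_not_desc D (h ▸ hsa)) hdesc
      set σ : I := (⟨cs.simple s * ↑y0, hsa.2⟩ : I) with hσ
      have hσcanc : cs.simple s * ↑σ = ↑y0 := simple_mul_cancel _
      have hℓσ : cs.length ↑σ = cs.length (cs.simple s * ↑y0) := rfl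
      have hσsd : SD cs s ↑σ := by
        show cs.length (cs.simple s * ↑σ) < cs.length ↑σ
        rw [hσcanc]
        have := hsa.1
        omega
      have hσI : cs.simple s * ↑σ ∈ I := by rw [hσcanc]; exact y0.2
      have hEqA : ((n y0 : ℤ) : A) = m σ + Qi * m y0 - waSum D s m y0 := by
        rw [← hEy0, hN y0, dif_pos hsa.2, cSt_sa hsa]
      have hEσ : D.bas.repr E σ = 0 := by
        conv_lhs => rw [hdecomp]
        rw [map_sum, Finsupp.finset_sum_apply]
        apply Finset.sum_eq_zero
        intro v hv
        rw [map_smul, Finsupp.smul_apply, smul_eq_mul]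
        by_cases hnv : n v = 0
        · rw [hnv]
          push_cast
          rw [zero_mul]
        · have hvB : v ∈ S.filter (fun v : I => n v ≠ 0) := Finset.mem_filter.mpr ⟨hv, hnv⟩
          have hlen := hy0max v hvB
          have hσv : σ ≠ v := by
            intro h
            have h4 : cs.length ↑σ ≤ cs.length ↑y0 := h ▸ hlen
            have h5 := hsa.1
            omega
          rw [c_repr_high hsupp htrans hσv (by have := hsa.1; omega), mul_zero]
      have hEqB : (0 : A) = m y0 + Q * m σ - waSum D s m σ := by
        have heqy : (⟨cs.simple s * ↑σ, hσI⟩ : I) = y0 := Subtype.ext hσcanc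
        rw [← hEσ, hN σ, dif_pos hσI, cSt_sd hσsd, heqy]
      have hXσ : waSum D s m σ + Qi * waSum D s m y0 = 0 := hXsa y0 hsa hsa.2
      have hfin : (1 + Qi * Qi) * waSum D s m y0 = ((-(n y0) : ℤ) : A) := by
        push_cast
        linear_combination hEqA - Qi * hEqB + Qi * hXσ - (m σ) * Qi_mul_Q
      obtain ⟨-, hzero⟩ := lemC (hge2 y0) hfin
      omega
    · -- WA case
      have hy0w : y0 ≠ w := fun h => hw_nwa (h ▸ hwa)
      have hX0 := hXwa y0 hwa
      have hEqA : ((n y0 : ℤ) : A) = (Q + Qi) * m y0 := by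
        rw [← hEy0, hN y0, dif_neg hwa.2.2, cSt_wa hwa, hX0, sub_zero, zero_add]
      obtain ⟨-, hzero⟩ := lemB (hm_ge1 y0 hy0w) hEqA.symm
      exact hy0ne hzero
    · exact hydesc_ge1 (Or.inr hwd)
  rw [hdecomp]
  apply Finset.sum_eq_zero
  intro v hv
  rw [hkill v hv]
  push_cast
  rw [zero_smul]

end DescentAux

section KFAux

variable {B W : Type} [Group W] {M : CoxeterMatrix B} {cs : CoxeterSystem M W}
  {I : Set W} {J : Set B} {D : WGModule cs I J} {c : I → D.V} {qp : I → I →₀ Polynomial ℤ}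

lemma one_apply_zero : ((1 : A) : ℤ →₀ ℤ) 0 = 1 := by
  have h1 : (1 : A) = AddMonoidAlgebra.single 0 1 := rfl
  rw [h1, AddMonoidAlgebra.coeff_single_apply, if_pos rfl]

/-- The bridge: the `q`-coefficient of a coordinate of `c u` is minus the constant
coefficient of the corresponding `q`-polynomial. -/
lemma m_coeff_one
    (hsupp : ∀ w y : I, qp w y ≠ 0 → BrLt cs (y : W) (w : W))
    (htrans : ∀ w : I, D.bas w = c w + (qp w).sum fun y p => (Q * Polynomial.toLaurent p) • c y)
    {u v : I} (hvu : v ≠ u) :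
    (D.bas.repr (c u) v : ℤ →₀ ℤ) 1 = - (((qp u) v).coeff 0) := by
  classical
  have hexp := c_expand htrans u v
  have happ : (D.bas.repr (c u) v : ℤ →₀ ℤ) 1
      = (((if u = v then (1:A) else 0)
          - ∑ y' ∈ (qp u).support,
            (Q * Polynomial.toLaurent ((qp u) y')) * D.bas.repr (c y') v : A) : ℤ →₀ ℤ) 1 := by
    rw [hexp]
  rw [AddMonoidAlgebra.coeff_sub, Finsupp.sub_apply] at happ
  rw [if_neg (fun h => hvu h.symm)] at happ
  have hzero1 : ((0 : A) : ℤ →₀ ℤ) 1 = 0 := rfl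
  rw [hzero1] at happ
  have hsum : ((∑ y' ∈ (qp u).support,
      (Q * Polynomial.toLaurent ((qp u) y')) * D.bas.repr (c y') v : A) : ℤ →₀ ℤ) 1
      = ∑ y' ∈ (qp u).support,
        (((Q * Polynomial.toLaurent ((qp u) y')) * D.bas.repr (c y') v : A) : ℤ →₀ ℤ) 1 :=
    by rw [AddMonoidAlgebra.coeff_sum, Finsupp.finset_sum_apply]
  have hterm : ∀ y' ∈ (qp u).support,
      (((Q * Polynomial.toLaurent ((qp u) y')) * D.bas.repr (c y') v : A) : ℤ →₀ ℤ) 1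
      = if y' = v then ((qp u) v).coeff 0 else 0 := by
    intro y' hy'
    by_cases hc : y' = v
    · subst hc
      rw [if_pos rfl, c_repr_self hsupp htrans, mul_one, Q_mul_apply]
      norm_num
      exact tl_apply_zero _
    · rw [if_neg hc]
      have hg : GeD 2 ((Q * Polynomial.toLaurent ((qp u) y')) * D.bas.repr (c y') v) := by
        have h1 := GeD.mul (GeD.mul GeD_Q (GeD_toLaurent ((qp u) y')))
          (c_repr_ge1 hsupp htrans (fun h => hc h.symm))
        exact GeD.mono (by norm_num) h1
      exact hg 1 (by norm_num)
  rw [hsum, Finset.sum_congr rfl hterm, Finset.sum_ite_eq' (qp u).support v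
    (fun _ => ((qp u) v).coeff 0)] at happ
  by_cases hv : v ∈ (qp u).support
  · rw [if_pos hv] at happ
    rw [happ]
    ring
  · rw [if_neg hv] at happ
    rw [happ, Finsupp.notMem_support_iff.mp hv]
    simp

/-- The crucial μ-vanishing facts, extracted from the descent theorem. -/
theorem kf_lemma
    (hcbar : ∀ w : I, D.bar (c w) = c w)
    (hsupp : ∀ w y : I, qp w y ≠ 0 → BrLt cs (y : W) (w : W))
    (htrans : ∀ w : I, D.bas w = c w + (qp w).sum fun y p => (Q * Polynomial.toLaurent p) • c y)
    (s : B) {u v : I} (hdu : Desc cs J s ↑u) (hav : ¬ Desc cs J s ↑v) :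
    ((qp u) v).coeff 0 = if (u : W) = cs.simple s * ↑v then 1 else 0 := by
  classical
  set m := D.bas.repr (c u) with hm
  have hvu : v ≠ u := fun h => hav (h ▸ hdu)
  have hE0 : D.T s (c u) + Qi • c u = 0 := descent_theorem hcbar hsupp htrans s u hdu
  have hzero : (if h : cs.simple s * ↑v ∈ I then m ⟨cs.simple s * ↑v, h⟩ else 0)
      + cSt cs I J s v * m v - waSum D s m v = 0 := by
    rw [← master D s (c u) v, hE0, map_zero]
    rfl
  have hm_self : m u = 1 := c_repr_self hsupp htrans u
  have hm_ge1 : ∀ z : I, z ≠ u → GeD 1 (m z) := fun z hz => c_repr_ge1 hsupp htrans hz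
  have hu_nwa : ¬ WA cs I J s ↑u := fun hwa => (wa_not_desc hwa) hdu
  have hge2 : GeD 2 (waSum D s m v) :=
    waSum_ge D s m v (fun z _ hz => hm_ge1 z (fun h => hu_nwa (h ▸ hz)))
  have hbridge : (m v : ℤ →₀ ℤ) 1 = - (((qp u) v).coeff 0) := m_coeff_one hsupp htrans hvu
  have h0app : (((if h : cs.simple s * ↑v ∈ I then m ⟨cs.simple s * ↑v, h⟩ else 0)
      + cSt cs I J s v * m v - waSum D s m v : A) : ℤ →₀ ℤ) 0 = ((0:A) : ℤ →₀ ℤ) 0 := by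
    rw [hzero]
  rw [AddMonoidAlgebra.coeff_sub, AddMonoidAlgebra.coeff_add, Finsupp.sub_apply, Finsupp.add_apply] at h0app
  have hws0 : (waSum D s m v : ℤ →₀ ℤ) 0 = 0 := hge2 0 (by norm_num)
  have hcm : ((cSt cs I J s v * m v : A) : ℤ →₀ ℤ) 0 = (m v : ℤ →₀ ℤ) 1 := by
    rcases not_desc_cases D hav with hsa | hwa
    · rw [cSt_sa hsa, Qi_mul_apply]
      norm_num
    · rw [cSt_wa hwa, add_mul, AddMonoidAlgebra.coeff_add, Finsupp.add_apply, Q_mul_apply, Qi_mul_apply]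
      have hmlow : (m v : ℤ →₀ ℤ) (0 - 1) = 0 := hm_ge1 v hvu (0 - 1) (by norm_num)
      rw [hmlow, zero_add]
      norm_num
  have hpt : (((if h : cs.simple s * ↑v ∈ I then m ⟨cs.simple s * ↑v, h⟩ else 0) : A) : ℤ →₀ ℤ) 0
      = if (u : W) = cs.simple s * ↑v then 1 else 0 := by
    by_cases h : cs.simple s * ↑v ∈ I
    · rw [dif_pos h]
      by_cases he : (⟨cs.simple s * ↑v, h⟩ : I) = u
      · have heq : (u : W) = cs.simple s * ↑v := by rw [← he]
        rw [if_pos heq, he, hm_self, one_apply_zero]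
      · have hne : ¬ ((u : W) = cs.simple s * ↑v) := fun hh => he (Subtype.ext hh.symm)
        rw [if_neg hne]
        exact hm_ge1 _ he 0 (by norm_num)
    · rw [dif_neg h]
      have hne : ¬ ((u : W) = cs.simple s * ↑v) := fun hh => h (hh ▸ u.2)
      rw [if_neg hne]
      rfl
  rw [hpt, hcm, hws0, hbridge] at h0app
  have hz0 : ((0:A) : ℤ →₀ ℤ) 0 = 0 := rfl
  rw [hz0] at h0app
  by_cases hcase : (u : W) = cs.simple s * ↑v
  · rw [if_pos hcase] at h0app ⊢
    omega
  · rw [if_neg hcase] at h0app ⊢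
    omega

end KFAux

section AscentAux

variable {B W : Type} [Group W] {M : CoxeterMatrix B} {cs : CoxeterSystem M W}
  {I : Set W} {J : Set B} {D : WGModule cs I J} {c : I → D.V} {qp : I → I →₀ Polynomial ℤ}

lemma ged1_qim {a : A} {k : ℤ} (h : GeD 1 a) (hval : (a : ℤ →₀ ℤ) 1 = -k) :
    GeD 1 (- (Qi * a) - ((k : ℤ) : A)) := by
  intro j hj
  rw [AddMonoidAlgebra.coeff_sub, Finsupp.sub_apply, AddMonoidAlgebra.coeff_neg, Finsupp.neg_apply, Qi_mul_apply, intCast_apply]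
  rcases lt_or_ge j 0 with hj0 | hj0
  · rw [h (j + 1) (by omega)]
    simp [show ¬ (j = 0) by omega]
  · have hj' : j = 0 := by omega
    subst hj'
    rw [(by norm_num : (0 : ℤ) + 1 = 1), hval]
    simp

lemma ged1_qqim {a : A} {k : ℤ} (h : GeD 1 a) (hval : (a : ℤ →₀ ℤ) 1 = -k) :
    GeD 1 (- ((Q + Qi) * a) - ((k : ℤ) : A)) := by
  intro j hj
  rw [AddMonoidAlgebra.coeff_sub, Finsupp.sub_apply, AddMonoidAlgebra.coeff_neg, Finsupp.neg_apply, add_mul, AddMonoidAlgebra.coeff_add, Finsupp.add_apply, Q_mul_apply,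
    Qi_mul_apply, intCast_apply]
  rcases lt_or_ge j 0 with hj0 | hj0
  · rw [h (j + 1) (by omega), h (j - 1) (by omega)]
    simp [show ¬ (j = 0) by omega]
  · have hj' : j = 0 := by omega
    subst hj'
    rw [h (0 - 1) (by norm_num)]
    rw [(by norm_num : (0 : ℤ) + 1 = 1), hval]
    simp

set_option maxHeartbeats 2000000 in
theorem ascent_theorem
    (hcbar : ∀ w : I, D.bar (c w) = c w)
    (hsupp : ∀ w y : I, qp w y ≠ 0 → BrLt cs (y : W) (w : W))
    (htrans : ∀ w : I, D.bas w = c w + (qp w).sum fun y p => (Q * Polynomial.toLaurent p) • c y)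
    (s : B) (w : I) (hasc : ¬ Desc cs J s ↑w) :
    D.T s (c w) = Q • c w
      + (∑ y ∈ (qp w).support.filter (fun y : I => Desc cs J s ↑y),
          ((((qp w) y).coeff 0 : ℤ) : A) • c y)
      + (if h : cs.simple s * ↑w ∈ I then c ⟨cs.simple s * ↑w, h⟩ else 0) := by
  classical
  set m := D.bas.repr (c w) with hm
  set filt := (qp w).support.filter (fun y : I => Desc cs J s ↑y) with hfilt
  set G : D.V := (∑ y ∈ filt, ((((qp w) y).coeff 0 : ℤ) : A) • c y)
      + (if h : cs.simple s * ↑w ∈ I then c ⟨cs.simple s * ↑w, h⟩ else 0) with hG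
  have hm_self : m w = 1 := c_repr_self hsupp htrans w
  have hm_ge1 : ∀ z : I, z ≠ w → GeD 1 (m z) := fun z hz => c_repr_ge1 hsupp htrans hz
  have hm_ge0 : ∀ z : I, GeD 0 (m z) := by
    intro z
    by_cases hz : z = w
    · rw [hz, hm_self]; exact GeD_one
    · exact GeD.mono (by norm_num) (hm_ge1 z hz)
  have hF : D.T s (c w) - Q • c w - G = 0 := by
    apply bar_fixed_eq_zero D
    · have hbarG : D.bar G = G := by
        rw [hG, D.bar_add, bar_finset_sum]
        congr 1
        · apply Finset.sum_congr rfl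
          intro y _
          rw [D.bar_smul, invert_intCast, hcbar y]
        · by_cases h : cs.simple s * ↑w ∈ I
          · rw [dif_pos h, hcbar]
          · rw [dif_neg h, bar_zero]
      rw [bar_sub, bar_sub, D.bar_T, D.bar_smul, invert_Q, hcbar w, hbarG]
      module
    · intro x
      have hrepr : D.bas.repr (D.T s (c w) - Q • c w - G) x
          = D.bas.repr (D.T s (c w) + Qi • c w) x - (Q + Qi) * m x - D.bas.repr G x := by
        simp only [map_sub, map_add, map_smul, Finsupp.sub_apply, Finsupp.add_apply,
          Finsupp.smul_apply, smul_eq_mul]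
        ring
      rw [hrepr, master D s (c w) x, ← hm]
      have hge1X : GeD 1 (waSum D s m x) := by
        have h1 : ∀ u ∈ m.support, WA cs I J s ↑u → GeD 0 (m u) := fun u _ _ => hm_ge0 u
        have h2 := waSum_ge D s m x h1
        exact GeD.mono (by norm_num) h2
      have hGx : D.bas.repr G x
          = (∑ y ∈ filt, ((((qp w) y).coeff 0 : ℤ) : A) * D.bas.repr (c y) x)
            + (if h : cs.simple s * ↑w ∈ I then D.bas.repr (c ⟨cs.simple s * ↑w, h⟩) x
               else 0) := by
        rw [hG, map_add, Finsupp.add_apply, map_sum, Finsupp.finset_sum_apply]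
        congr 1
        · apply Finset.sum_congr rfl
          intro y _
          rw [map_smul, Finsupp.smul_apply, smul_eq_mul]
        · by_cases h : cs.simple s * ↑w ∈ I
          · rw [dif_pos h, dif_pos h]
          · rw [dif_neg h, dif_neg h, map_zero]
            rfl
      rw [hGx]
      set μx : A := (if Desc cs J s ↑x then ((((qp w) x).coeff 0 : ℤ) : A) else 0) with hμx
      have hGS : GeD 1 ((∑ y ∈ filt, ((((qp w) y).coeff 0 : ℤ) : A) * D.bas.repr (c y) x)
          - μx) := by
        rw [hμx]
        by_cases hx : x ∈ filt
        · rw [if_pos ((Finset.mem_filter.mp hx).2)]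
          rw [← Finset.add_sum_erase filt _ hx, c_repr_self hsupp htrans, mul_one]
          have hre : ((((qp w) x).coeff 0 : ℤ) : A)
              + (∑ y ∈ filt.erase x, ((((qp w) y).coeff 0 : ℤ) : A) * D.bas.repr (c y) x)
              - ((((qp w) x).coeff 0 : ℤ) : A)
              = ∑ y ∈ filt.erase x, ((((qp w) y).coeff 0 : ℤ) : A) * D.bas.repr (c y) x := by
            ring
          rw [hre]
          apply GeD.finsetSum
          intro y hy
          have hxy : x ≠ y := fun h => (Finset.ne_of_mem_erase hy) h.symm
          exact GeD.mono (by norm_num)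
            (GeD.mul (GeD_intCast0 _) (c_repr_ge1 hsupp htrans hxy))
        · have hterm : GeD 1 (∑ y ∈ filt, ((((qp w) y).coeff 0 : ℤ) : A)
              * D.bas.repr (c y) x) := by
            apply GeD.finsetSum
            intro y hy
            have hxy : x ≠ y := fun h => hx (h ▸ hy)
            exact GeD.mono (by norm_num)
              (GeD.mul (GeD_intCast0 _) (c_repr_ge1 hsupp htrans hxy))
          by_cases hdx : Desc cs J s ↑x
          · rw [if_pos hdx]
            have hnotin : (qp w) x = 0 := by
              by_contra hne
              exact hx (Finset.mem_filter.mpr ⟨Finsupp.mem_support_iff.mpr hne, hdx⟩)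
            rw [hnotin]
            simp only [Polynomial.coeff_zero, Int.cast_zero]
            rw [sub_zero]
            exact hterm
          · rw [if_neg hdx, sub_zero]
            exact hterm
      have hxne : ∀ (hne : cs.simple s * ↑x ≠ ↑w) (h : cs.simple s * ↑w ∈ I),
          x ≠ (⟨cs.simple s * ↑w, h⟩ : I) := by
        intro hne h hx
        apply hne
        have h1 : (x : W) = cs.simple s * ↑w := congrArg Subtype.val hx
        rw [h1, simple_mul_cancel]
      have hdp_ge1 : (cs.simple s * ↑x ≠ ↑w) →
          GeD 1 (if h : cs.simple s * ↑w ∈ I then D.bas.repr (c ⟨cs.simple s * ↑w, h⟩) x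
            else 0) := by
        intro hne
        by_cases h : cs.simple s * ↑w ∈ I
        · rw [dif_pos h]
          exact c_repr_ge1 hsupp htrans (hxne hne h)
        · rw [dif_neg h]
          exact GeD.zero 1
      rcases status_cases D s x with hsd | hsa | hwa | hwd
      · -- SD x
        have hdx : Desc cs J s ↑x := Or.inl hsd
        have hxw : x ≠ w := fun h => hasc (h ▸ hdx)
        have hbr : (m x : ℤ →₀ ℤ) 1 = - (((qp w) x).coeff 0) := m_coeff_one hsupp htrans hxw
        have hμval : μx = ((((qp w) x).coeff 0 : ℤ) : A) := by rw [hμx, if_pos hdx]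
        have hsvI := sd_smul_mem D hsd
        rw [dif_pos hsvI, cSt_sd hsd]
        by_cases hsxw : cs.simple s * ↑x = ↑w
        · -- x is the partner of w
          have hswI : cs.simple s * ↑w ∈ I := by
            have h1 : cs.simple s * ↑w = ↑x := by rw [← hsxw, simple_mul_cancel]
            rw [h1]; exact x.2
          have hptw : (⟨cs.simple s * ↑x, hsvI⟩ : I) = w := Subtype.ext hsxw
          have hdpx : (if h : cs.simple s * ↑w ∈ I
              then D.bas.repr (c ⟨cs.simple s * ↑w, h⟩) x else 0) = 1 := by
            rw [dif_pos hswI]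
            have h2 : (⟨cs.simple s * ↑w, hswI⟩ : I) = x := by
              apply Subtype.ext
              show cs.simple s * ↑w = ↑x
              rw [← hsxw, simple_mul_cancel]
            rw [h2, c_repr_self hsupp htrans]
          rw [hptw, hdpx, hm_self]
          have hre : (1 : A) + Q * m x - waSum D s m x - (Q + Qi) * m x
              - ((∑ y ∈ filt, ((((qp w) y).coeff 0 : ℤ) : A) * D.bas.repr (c y) x) + 1)
              = (- (Qi * m x) - μx)
                - waSum D s m x
                - ((∑ y ∈ filt, ((((qp w) y).coeff 0 : ℤ) : A) * D.bas.repr (c y) x) - μx) := by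
            ring
          rw [hre]
          have hqim := ged1_qim (hm_ge1 x hxw) hbr
          rw [← hμval] at hqim
          exact GeD.sub (GeD.sub hqim hge1X) hGS
        · have hptne : (⟨cs.simple s * ↑x, hsvI⟩ : I) ≠ w := fun h => hsxw (congrArg Subtype.val h)
          have hdp := hdp_ge1 hsxw
          have hre : m (⟨cs.simple s * ↑x, hsvI⟩ : I) + Q * m x - waSum D s m x - (Q + Qi) * m x
              - ((∑ y ∈ filt, ((((qp w) y).coeff 0 : ℤ) : A) * D.bas.repr (c y) x)
                + (if h : cs.simple s * ↑w ∈ I then D.bas.repr (c ⟨cs.simple s * ↑w, h⟩) x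
                   else 0))
              = m (⟨cs.simple s * ↑x, hsvI⟩ : I)
                + (- (Qi * m x) - μx)
                - waSum D s m x
                - ((∑ y ∈ filt, ((((qp w) y).coeff 0 : ℤ) : A) * D.bas.repr (c y) x) - μx)
                - (if h : cs.simple s * ↑w ∈ I then D.bas.repr (c ⟨cs.simple s * ↑w, h⟩) x
                   else 0) := by
            ring
          rw [hre]
          have hqim := ged1_qim (hm_ge1 x hxw) hbr
          rw [← hμval] at hqim
          exact GeD.sub (GeD.sub (GeD.sub (GeD.add (hm_ge1 _ hptne) hqim) hge1X) hGS) hdp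
      · -- SA x
        have hnd : ¬ Desc cs J s ↑x := sa_not_desc D hsa
        have hμ0 : μx = 0 := by rw [hμx, if_neg hnd]
        rw [dif_pos hsa.2, cSt_sa hsa]
        have hsxw : cs.simple s * ↑x ≠ ↑w := by
          intro heq
          apply hasc
          left
          show cs.length (cs.simple s * ↑w) < cs.length ↑w
          have h1 : cs.simple s * ↑w = ↑x := by rw [← heq, simple_mul_cancel]
          rw [h1, ← heq]
          exact hsa.1
        have hdp := hdp_ge1 hsxw
        by_cases hxw : x = w
        · subst hxw
          have hptzero : m (⟨cs.simple s * ↑x, hsa.2⟩ : I) = 0 := by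
            apply c_repr_high hsupp htrans
            · intro h
              have h1 : cs.simple s * (x : W) = ↑x := congrArg Subtype.val h
              have h2 := length_smul_ne (cs := cs) s (x : W)
              exact h2 (by rw [h1])
            · show cs.length ↑x ≤ cs.length (cs.simple s * ↑x)
              have := hsa.1
              omega
          rw [hptzero, hm_self]
          have hre : (0 : A) + Qi * 1 - waSum D s m x - (Q + Qi) * 1
              - ((∑ y ∈ filt, ((((qp x) y).coeff 0 : ℤ) : A) * D.bas.repr (c y) x)
                + (if h : cs.simple s * ↑x ∈ I then D.bas.repr (c ⟨cs.simple s * ↑x, h⟩) x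
                   else 0))
              = - Q - waSum D s m x
                - ((∑ y ∈ filt, ((((qp x) y).coeff 0 : ℤ) : A) * D.bas.repr (c y) x) - μx)
                - (if h : cs.simple s * ↑x ∈ I then D.bas.repr (c ⟨cs.simple s * ↑x, h⟩) x
                   else 0) := by
            rw [hμ0]
            ring
          rw [hre]
          refine GeD.sub (GeD.sub (GeD.sub ?_ hge1X) hGS) hdp
          exact GeD.neg GeD_Q
        · have hre : m (⟨cs.simple s * ↑x, hsa.2⟩ : I) + Qi * m x - waSum D s m x
              - (Q + Qi) * m x
              - ((∑ y ∈ filt, ((((qp w) y).coeff 0 : ℤ) : A) * D.bas.repr (c y) x)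
                + (if h : cs.simple s * ↑w ∈ I then D.bas.repr (c ⟨cs.simple s * ↑w, h⟩) x
                   else 0))
              = m (⟨cs.simple s * ↑x, hsa.2⟩ : I) - Q * m x - waSum D s m x
                - ((∑ y ∈ filt, ((((qp w) y).coeff 0 : ℤ) : A) * D.bas.repr (c y) x) - μx)
                - (if h : cs.simple s * ↑w ∈ I then D.bas.repr (c ⟨cs.simple s * ↑w, h⟩) x
                   else 0) := by
            rw [hμ0]
            ring
          rw [hre]
          have hptne : (⟨cs.simple s * ↑x, hsa.2⟩ : I) ≠ w :=
            fun h => hsxw (congrArg Subtype.val h)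
          refine GeD.sub (GeD.sub (GeD.sub (GeD.sub (hm_ge1 _ hptne) ?_) hge1X) hGS) hdp
          exact GeD.mono (by norm_num) (GeD.mul GeD_Q (hm_ge1 x hxw))
      · -- WA x
        have hnd : ¬ Desc cs J s ↑x := wa_not_desc hwa
        have hμ0 : μx = 0 := by rw [hμx, if_neg hnd]
        rw [dif_neg hwa.2.2, cSt_wa hwa]
        have hsxw : cs.simple s * ↑x ≠ ↑w := fun heq => hwa.2.2 (heq ▸ w.2)
        have hdp := hdp_ge1 hsxw
        have hre : (0 : A) + (Q + Qi) * m x - waSum D s m x - (Q + Qi) * m x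
            - ((∑ y ∈ filt, ((((qp w) y).coeff 0 : ℤ) : A) * D.bas.repr (c y) x)
              + (if h : cs.simple s * ↑w ∈ I then D.bas.repr (c ⟨cs.simple s * ↑w, h⟩) x
                 else 0))
            = - waSum D s m x
              - ((∑ y ∈ filt, ((((qp w) y).coeff 0 : ℤ) : A) * D.bas.repr (c y) x) - μx)
              - (if h : cs.simple s * ↑w ∈ I then D.bas.repr (c ⟨cs.simple s * ↑w, h⟩) x
                 else 0) := by
          rw [hμ0]
          ring
        rw [hre]
        exact GeD.sub (GeD.sub (GeD.neg hge1X) hGS) hdp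
      · -- WD x
        have hdx : Desc cs J s ↑x := Or.inr hwd
        have hxw : x ≠ w := fun h => hasc (h ▸ hdx)
        have hbr : (m x : ℤ →₀ ℤ) 1 = - (((qp w) x).coeff 0) := m_coeff_one hsupp htrans hxw
        have hμval : μx = ((((qp w) x).coeff 0 : ℤ) : A) := by rw [hμx, if_pos hdx]
        have hnm : cs.simple s * ↑x ∉ I := fun hmem => hwd.2 (D.subset hmem)
        rw [dif_neg hnm, cSt_wd D hwd]
        have hsxw : cs.simple s * ↑x ≠ ↑w := fun heq => hwd.2 (heq ▸ D.subset w.2)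
        have hdp := hdp_ge1 hsxw
        have hre : (0 : A) + 0 * m x - waSum D s m x - (Q + Qi) * m x
            - ((∑ y ∈ filt, ((((qp w) y).coeff 0 : ℤ) : A) * D.bas.repr (c y) x)
              + (if h : cs.simple s * ↑w ∈ I then D.bas.repr (c ⟨cs.simple s * ↑w, h⟩) x
                 else 0))
            = (- ((Q + Qi) * m x) - μx)
              - waSum D s m x
              - ((∑ y ∈ filt, ((((qp w) y).coeff 0 : ℤ) : A) * D.bas.repr (c y) x) - μx)
              - (if h : cs.simple s * ↑w ∈ I then D.bas.repr (c ⟨cs.simple s * ↑w, h⟩) x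
                 else 0) := by
          ring
        rw [hre]
        have hqim := ged1_qqim (hm_ge1 x hxw) hbr
        rw [← hμval] at hqim
        exact GeD.sub (GeD.sub (GeD.sub hqim hge1X) hGS) hdp
  have h2 : D.T s (c w) - Q • c w - G + (Q • c w + G) = 0 + (Q • c w + G) := by rw [hF]
  rw [zero_add] at h2
  rw [add_assoc, ← hG, ← h2]
  module

end AscentAux









/-- `(C, μ, τ)` is a `W`-graph: the generators act on the `c_w` by the
`W`-graph formulas with `τ(c_w) = D_J(w)` and edge weights `μ`. -/
theorem stmt11 (I : Set W) (J : Set B) (D : WGModule cs I J)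
    (c : I → D.V) (qp : I → I →₀ Polynomial ℤ)
    (hcbar : ∀ w : I, D.bar (c w) = c w)
    (hsupp : ∀ w y : I, qp w y ≠ 0 → BrLt cs (y : W) (w : W))
    (htrans : ∀ w : I,
      D.bas w = c w + (qp w).sum fun y p => (Q * Polynomial.toLaurent p) • c y)
    (s : B) (w : I) :
    (Desc cs J s (w : W) → D.T s (c w) = -Qi • c w) ∧
    (¬ Desc cs J s (w : W) → D.T s (c w) = Q • c w +
      ∑ᶠ u : I,
        (if Desc cs J s (u : W) then
          (if BrLt cs (u : W) (w : W) then (qp w u).coeff 0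
           else if BrLt cs (w : W) (u : W) then (qp u w).coeff 0 else 0)
         else 0) • c u) := by
  classical
  constructor
  · intro hdesc
    have h := descent_theorem hcbar hsupp htrans s w hdesc
    rw [neg_smul]
    exact eq_neg_of_add_eq_zero_left h
  · intro hasc
    have h := ascent_theorem hcbar hsupp htrans s w hasc
    rw [h, add_assoc]
    congr 1
    have hasc_len : cs.length ↑w < cs.length (cs.simple s * ↑w) := by
      rcases not_desc_cases D hasc with h' | h'
      exacts [h'.1, h'.1]
    set f : I → D.V := fun u => (if Desc cs J s (u : W) then
          (if BrLt cs (u : W) (w : W) then (qp w u).coeff 0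
           else if BrLt cs (w : W) (u : W) then (qp u w).coeff 0 else 0)
         else 0) • c u with hf
    set filt := (qp w).support.filter (fun y : I => Desc cs J s ↑y) with hfilt
    have hterm : ∀ u ∈ filt, f u = ((((qp w) u).coeff 0 : ℤ) : A) • c u := by
      intro u hu
      have hd : Desc cs J s ↑u := (Finset.mem_filter.mp hu).2
      have hb : BrLt cs (u : W) (w : W) :=
        hsupp w u (Finsupp.mem_support_iff.mp (Finset.mem_filter.mp hu).1)
      rw [hf]
      simp only [if_pos hd, if_pos hb]
      rw [Int.cast_smul_eq_zsmul]
    have hfzero : ∀ u : I, f u ≠ 0 → Desc cs J s ↑u := by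
      intro u hu
      by_contra hd
      apply hu
      rw [hf]
      simp only [if_neg hd, zero_smul]
    by_cases hsw : cs.simple s * ↑w ∈ I
    · set σ : I := (⟨cs.simple s * ↑w, hsw⟩ : I) with hσ
      have hℓσ : cs.length ↑σ = cs.length (cs.simple s * ↑w) := rfl
      have hσdesc : Desc cs J s ↑σ := by
        left
        show cs.length (cs.simple s * ↑σ) < cs.length ↑σ
        have h1 : cs.simple s * ↑σ = ↑w := simple_mul_cancel _
        rw [h1]
        omega
      have hσnotfilt : σ ∉ filt := by
        intro hmem
        have h1 := hsupp w σ (Finsupp.mem_support_iff.mp (Finset.mem_filter.mp hmem).1)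
        have h2 := brlt_length h1
        omega
      have hsub : Function.support f ⊆ ↑(insert σ filt) := by
        intro u hu
        rw [Function.mem_support] at hu
        rw [Finset.coe_insert, Set.mem_insert_iff]
        have hd := hfzero u hu
        by_cases hb1 : BrLt cs (u : W) (w : W)
        · right
          have hcne : (qp w u).coeff 0 ≠ 0 := by
            intro hz
            apply hu
            rw [hf]
            simp only [if_pos hd, if_pos hb1, hz, zero_smul]
          have : qp w u ≠ 0 := fun hz => hcne (by rw [hz]; rfl)
          exact Finset.mem_filter.mpr ⟨Finsupp.mem_support_iff.mpr this, hd⟩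
        · left
          by_cases hb2 : BrLt cs (w : W) (u : W)
          · have hkf := kf_lemma hcbar hsupp htrans s hd hasc
            have hcne : (qp u w).coeff 0 ≠ 0 := by
              intro hz
              apply hu
              rw [hf]
              simp only [if_pos hd, if_neg hb1, if_pos hb2, hz, zero_smul]
            rw [hkf] at hcne
            by_cases hcase : (u : W) = cs.simple s * ↑w
            · exact Subtype.ext hcase
            · rw [if_neg hcase] at hcne
              exact absurd rfl hcne
          · exfalso
            apply hu
            rw [hf]
            simp only [if_pos hd, if_neg hb1, if_neg hb2, zero_smul]
      rw [finsum_eq_sum_of_support_subset f hsub, Finset.sum_insert hσnotfilt]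
      have hfσ : f σ = c σ := by
        have hb1 : ¬ BrLt cs (σ : W) (w : W) := by
          intro hb
          have := brlt_length hb
          omega
        have hb2 : BrLt cs (w : W) (σ : W) := brlt_simple_mul hasc_len
        have hkf := kf_lemma hcbar hsupp htrans s hσdesc hasc
        rw [if_pos rfl] at hkf
        rw [hf]
        simp only [if_pos hσdesc, if_neg hb1, if_pos hb2, hkf, one_smul]
      rw [hfσ, Finset.sum_congr rfl hterm, dif_pos hsw]
      rw [add_comm]
    · have hsub : Function.support f ⊆ ↑filt := by
        intro u hu
        rw [Function.mem_support] at hu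
        have hd := hfzero u hu
        by_cases hb1 : BrLt cs (u : W) (w : W)
        · have hcne : (qp w u).coeff 0 ≠ 0 := by
            intro hz
            apply hu
            rw [hf]
            simp only [if_pos hd, if_pos hb1, hz, zero_smul]
          have : qp w u ≠ 0 := fun hz => hcne (by rw [hz]; rfl)
          exact Finset.mem_filter.mpr ⟨Finsupp.mem_support_iff.mpr this, hd⟩
        · exfalso
          by_cases hb2 : BrLt cs (w : W) (u : W)
          · have hkf := kf_lemma hcbar hsupp htrans s hd hasc
            have hcase : ¬ ((u : W) = cs.simple s * ↑w) := by
              intro heq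
              exact hsw (heq ▸ u.2)
            rw [if_neg hcase] at hkf
            apply hu
            rw [hf]
            simp only [if_pos hd, if_neg hb1, if_pos hb2, hkf, zero_smul]
          · apply hu
            rw [hf]
            simp only [if_pos hd, if_neg hb1, if_neg hb2, zero_smul]
      rw [finsum_eq_sum_of_support_subset f hsub, Finset.sum_congr rfl hterm, dif_neg hsw,
        add_zero]

end WGI
end
end

section
/- Let (W,S) be a Coxeter system, u ∈ W, and 𝔍 = { w ∈ W : w ≤_L u } (the left weak order ideal generated by u). Suppose 𝔍 is a W-graph ideal with respect to J ⊆ S. If w ∈ 𝔍 and s is a weak ascent of w (i.e., sw ∈ D_J \ 𝔍), then every y ∈ 𝔍 with y < sw in Bruhat order satisfies y ≤ w. -/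
open LaurentPolynomial Polynomial

noncomputable section

namespace WGI

variable {B W : Type} [Group W] {M : CoxeterMatrix B} (cs : CoxeterSystem M W)

open scoped Classical



section BruhatAux

open CoxeterSystem List

variable {B W : Type} [Group W] {M : CoxeterMatrix B} (cs : CoxeterSystem M W)

local prefix:100 "ℓ" => cs.length
local prefix:100 "σ" => cs.simple
local prefix:100 "π" => cs.wordProd
local prefix:100 "ris" => cs.rightInvSeq
local prefix:100 "lis" => cs.leftInvSeq

namespace BA

/-! ### Basic facts about `BrLe` -/

lemma brle_refl (w : W) : BrLe cs w w := Relation.ReflTransGen.refl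

lemma brle_trans {x y z : W} (h1 : BrLe cs x y) (h2 : BrLe cs y z) : BrLe cs x z :=
  Relation.ReflTransGen.trans h1 h2

lemma brle_step_left {u t : W} (ht : cs.IsReflection t)
    (h : ℓ u ≤ ℓ (t * u)) : BrLe cs u (t * u) :=
  Relation.ReflTransGen.single ⟨h, t, Or.inl ht, rfl⟩

lemma brle_step_right {u t : W} (ht : cs.IsReflection t)
    (h : ℓ u ≤ ℓ (u * t)) : BrLe cs u (u * t) := by
  have key : u * t = (u * t * u⁻¹) * u := by group
  refine Relation.ReflTransGen.single ⟨h, u * t * u⁻¹, Or.inl (ht.conj u), key⟩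

lemma brle_length_le {x y : W} (h : BrLe cs x y) : ℓ x ≤ ℓ y := by
  induction h with
  | refl => exact le_rfl
  | tail _ h2 ih => exact ih.trans h2.1

lemma brle_eq_of_length_ge {x y : W} (h : BrLe cs x y) (hl : ℓ y ≤ ℓ x) : x = y := by
  induction h using Relation.ReflTransGen.head_induction_on with
  | refl => rfl
  | head step rest ih =>
    obtain ⟨hlen, t, ht | rfl, rfl⟩ := step
    · exfalso
      have h1 : ℓ _ < ℓ (t * _) := lt_of_le_of_ne hlen (ht.length_mul_right_ne _).symm
      have h2 := brle_length_le cs rest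
      omega
    · rw [one_mul] at *
      exact ih hl

lemma brlt_length_lt {x y : W} (h : BrLe cs x y) (hne : x ≠ y) : ℓ x < ℓ y := by
  rcases lt_or_eq_of_le (brle_length_le cs h) with h' | h'
  · exact h'
  · exact absurd (brle_eq_of_length_ge cs h (le_of_eq h'.symm)) hne

lemma brle_inv {x y : W} (h : BrLe cs x y) : BrLe cs x⁻¹ y⁻¹ := by
  induction h with
  | refl => exact brle_refl cs _
  | tail _ h2 ih =>
    rename_i b c _
    obtain ⟨hlen, t, ht | rfl, rfl⟩ := h2
    · have key : (t * b)⁻¹ = b⁻¹ * t⁻¹ := mul_inv_rev t b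
      rw [key]
      refine brle_trans cs ih (brle_step_right cs ht.isReflection_inv ?_)
      rw [← key, cs.length_inv, cs.length_inv]
      exact hlen
    · rwa [one_mul]

/-- Weak (suffix) order implies Bruhat order. -/
lemma wkle_brle {y w : W} (h : WkLe cs y w) : BrLe cs y w := by
  obtain ⟨γ, hγred, hγ⟩ := cs.exists_reduced_word' (w * y⁻¹)
  have hw : w = π γ * y := by rw [← hγ]; group
  have hlen : ℓ (π γ * y) = γ.length + ℓ y := by
    have h2 := h
    unfold WkLe at h2
    unfold CoxeterSystem.IsReduced at hγred
    rw [hγ, hγred] at h2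
    rw [← hw]
    omega
  clear hγ hγred h
  rw [hw]; clear hw
  induction γ with
  | nil => simpa using brle_refl cs y
  | cons i γ' ih =>
    rw [cs.wordProd_cons, mul_assoc] at hlen ⊢
    simp only [List.length_cons] at hlen
    have h1 : ℓ (π γ' * y) ≤ γ'.length + ℓ y := by
      calc ℓ (π γ' * y) ≤ ℓ (π γ') + ℓ y := cs.length_mul_le _ _
        _ ≤ γ'.length + ℓ y := by have := cs.length_wordProd_le γ'; omega
    have h2 : ℓ (π γ' * y) + 1 ≥ ℓ (σ i * (π γ' * y)) := by
      have := cs.length_simple_mul (π γ' * y) i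
      omega
    have h3 : ℓ (π γ' * y) = γ'.length + ℓ y := by
      have h4 : ℓ (σ i * (π γ' * y)) + 1 ≥ ℓ (π γ' * y) := by
        have := cs.length_simple_mul (π γ' * y) i
        omega
      omega
    refine brle_trans cs (ih h3) (brle_step_left cs (cs.isReflection_simple i) ?_)
    omega

end BA

end BruhatAux

/-! ### The sign action and the strong exchange property -/

noncomputable section SignAction

open CoxeterSystem List

variable {B W : Type} [Group W] {M : CoxeterMatrix B} (cs : CoxeterSystem M W)

local prefix:100 "ℓ" => cs.length
local prefix:100 "σ" => cs.simple
local prefix:100 "π" => cs.wordProd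
local prefix:100 "ris" => cs.rightInvSeq

namespace BA

/-- `(-1)^(number of occurrences of `t` in `L`)`. -/
def nflips (L : List W) (t : W) : ℤˣ :=
  (L.map (fun x => if x = t then (-1 : ℤˣ) else 1)).prod

@[simp] lemma nflips_nil (t : W) : nflips [] t = 1 := rfl

lemma nflips_cons (a : W) (L : List W) (t : W) :
    nflips (a :: L) t = (if a = t then (-1 : ℤˣ) else 1) * nflips L t := by
  simp [nflips]

lemma nflips_append (L L' : List W) (t : W) :
    nflips (L ++ L') t = nflips L t * nflips L' t := by
  simp [nflips]

lemma nflips_reverse (L : List W) (t : W) :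
    nflips L.reverse t = nflips L t := by
  simp [nflips, List.map_reverse, List.prod_reverse]

lemma nflips_sq (L : List W) (t : W) : nflips L t * nflips L t = 1 :=
  Int.units_mul_self _

lemma nflips_of_not_mem {L : List W} {t : W} (h : t ∉ L) : nflips L t = 1 := by
  induction L with
  | nil => rfl
  | cons a L ih =>
    rw [nflips_cons, if_neg (fun e => h (by rw [← e]; exact List.mem_cons_self)),
      ih (fun hm => h (List.mem_cons_of_mem a hm)), one_mul]

lemma nflips_map_of_iff {L : List W} {f : W → W} {t t' : W}
    (hf : ∀ x, f x = t ↔ x = t') : nflips (L.map f) t = nflips L t' := by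
  unfold nflips
  rw [List.map_map]
  congr 1
  apply List.map_congr_left
  intro x _
  simp only [Function.comp_apply]
  by_cases h : x = t'
  · rw [if_pos ((hf x).2 h), if_pos h]
  · rw [if_neg (fun e => h ((hf x).1 e)), if_neg h]

/-- One step of the sign action. -/
def phiFun (i : B) : W × ℤˣ → W × ℤˣ :=
  fun p => (σ i * p.1 * σ i, if p.1 = σ i then -p.2 else p.2)

lemma simple_conj_conj (i : B) (t : W) : σ i * (σ i * t * σ i) * σ i = t := by
  have : σ i * (σ i * t * σ i) * σ i = (σ i * σ i) * t * (σ i * σ i) := by group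
  rw [this, cs.simple_mul_simple_self, one_mul, mul_one]

lemma phiFun_invol (i : B) : Function.Involutive (phiFun cs i) := by
  rintro ⟨t, e⟩
  unfold phiFun
  dsimp only
  by_cases h : t = σ i
  · subst h
    simp [cs.simple_mul_simple_cancel_right]
  · have h2 : σ i * t * σ i ≠ σ i := by
      intro e2
      apply h
      have h3 := simple_conj_conj cs i t
      rw [e2, cs.simple_mul_simple_cancel_right] at h3
      exact h3.symm
    rw [if_neg h, if_neg h2, simple_conj_conj cs i t]

/-- The sign action of a single generator, as a permutation. -/
def phi (i : B) : Equiv.Perm (W × ℤˣ) := Function.Involutive.toPerm _ (phiFun_invol cs i)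

lemma phi_apply (i : B) (t : W) (e : ℤˣ) :
    phi cs i (t, e) = (σ i * t * σ i, if t = σ i then -e else e) := rfl

/-- The key formula for the action of a word under the sign action. -/
lemma prod_phi_apply (ω : List B) (t : W) (e : ℤˣ) :
    ((ω.map (phi cs)).prod) (t, e) = (π ω * t * (π ω)⁻¹, nflips (ris ω) t * e) := by
  induction ω generalizing t e with
  | nil => simp [nflips]
  | cons i ω ih =>
    rw [List.map_cons, List.prod_cons, Equiv.Perm.mul_apply, ih, phi_apply]
    have hfst : σ i * (π ω * t * (π ω)⁻¹) * σ i = π (i :: ω) * t * (π (i :: ω))⁻¹ := by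
      rw [cs.wordProd_cons, mul_inv_rev, cs.inv_simple]
      group
    have hris : ris (i :: ω) = ((π ω)⁻¹ * σ i * π ω) :: ris ω := rfl
    rw [hris, nflips_cons]
    by_cases h : t = (π ω)⁻¹ * σ i * π ω
    · have h1 : π ω * t * (π ω)⁻¹ = σ i := by rw [h]; group
      rw [if_pos h1, if_pos h.symm, hfst]
      simp [neg_one_mul, neg_mul]
    · have h1 : π ω * t * (π ω)⁻¹ ≠ σ i := by
        intro e1
        apply h
        rw [← e1]; group
      rw [if_neg h1, if_neg (fun e2 => h e2.symm), hfst, one_mul]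

lemma alternatingWord_two_step (i i' : B) (m : ℕ) :
    CoxeterSystem.alternatingWord i i' (2 * m + 2) =
      i :: i' :: CoxeterSystem.alternatingWord i i' (2 * m) := by
  rw [CoxeterSystem.alternatingWord_succ' i i' (2*m+1), CoxeterSystem.alternatingWord_succ' i i' (2*m)]
  have h1 : ¬ Even (2*m+1) := by simp [Nat.even_add_one]
  have h2 : Even (2*m) := even_two_mul m
  rw [if_neg h1, if_pos h2]

lemma prod_map_phi_alternating (i i' : B) (m : ℕ) :
    ((CoxeterSystem.alternatingWord i i' (2 * m)).map (phi cs)).prod =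
      (phi cs i * phi cs i') ^ m := by
  induction m with
  | zero => simp [CoxeterSystem.alternatingWord]
  | succ m ih =>
    have : 2 * (m + 1) = 2 * m + 2 := by ring
    rw [this, alternatingWord_two_step, List.map_cons, List.map_cons, List.prod_cons,
      List.prod_cons, ih, pow_succ']
    rw [mul_assoc]

lemma drop_alternatingWord (i i' : B) (k n : ℕ) :
    (CoxeterSystem.alternatingWord i i' n).drop k =
      CoxeterSystem.alternatingWord i i' (n - k) := by
  induction n generalizing k with
  | zero => simp [CoxeterSystem.alternatingWord]
  | succ n ih =>
    cases k with
    | zero => simp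
    | succ k =>
      rw [CoxeterSystem.alternatingWord_succ', List.drop_succ_cons, ih k]
      congr 1
      omega

/-- The letter of the alternating word at a given position. -/
def altLetter (i i' : B) (q : ℕ) : B := if Even q then i' else i

lemma get?_alternatingWord (i i' : B) (n k : ℕ) (h : k < n) :
    (CoxeterSystem.alternatingWord i i' n)[k]? = some (altLetter i i' (n - 1 - k)) := by
  have h1 : (CoxeterSystem.alternatingWord i i' n)[k]?
      = ((CoxeterSystem.alternatingWord i i' n).drop k)[0]? := by
    rw [List.getElem?_drop]
    norm_num
  rw [h1, drop_alternatingWord]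
  have h2 : n - k = (n - 1 - k) + 1 := by omega
  rw [h2, CoxeterSystem.alternatingWord_succ']
  rfl

/-- Recursion for products of alternating words. -/
lemma wordProd_alt_succ (i i' : B) (q : ℕ) :
    π (CoxeterSystem.alternatingWord i i' (q + 1))
      = π (CoxeterSystem.alternatingWord i i' q) * ((σ i * σ i')⁻¹) ^ q * σ i' := by
  have hz : σ i' * (σ i * σ i') = (σ i * σ i')⁻¹ * σ i' := by
    rw [mul_inv_rev, cs.inv_simple, cs.inv_simple]
    group
  have hsemi : SemiconjBy (σ i') (σ i * σ i') ((σ i * σ i')⁻¹) := hz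
  have hsj : ∀ k : ℕ, σ i' * (σ i * σ i') ^ k = ((σ i * σ i')⁻¹) ^ k * σ i' :=
    fun k => (hsemi.pow_right k).eq
  have hsj' : ∀ k : ℕ, σ i' * ((σ i * σ i')⁻¹) ^ k = (σ i * σ i') ^ k * σ i' := by
    intro k
    have h0 := ((hsemi.inv_right).pow_right k).eq
    rwa [inv_inv] at h0
  have hcancel : ∀ k l : ℕ, (σ i * σ i') ^ k * ((σ i * σ i')⁻¹) ^ (k + l)
      = ((σ i * σ i')⁻¹) ^ l := by
    intro k l
    rw [pow_add, ← mul_assoc, inv_pow, mul_inv_cancel, one_mul]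
  rcases Nat.even_or_odd q with he | ho
  · obtain ⟨j, rfl⟩ := he
    have hp1 := cs.prod_alternatingWord_eq_mul_pow i i' (j + j)
    rw [if_pos ⟨j, rfl⟩, one_mul, (by omega : (j + j) / 2 = j)] at hp1
    have hp2 := cs.prod_alternatingWord_eq_mul_pow i i' (j + j + 1)
    rw [if_neg (by simp [Nat.even_add_one, Nat.even_add]), (by omega : (j + j + 1) / 2 = j)] at hp2
    rw [hp1, hp2, hcancel j j, hsj j]
  · obtain ⟨j, rfl⟩ := ho
    have hp1 := cs.prod_alternatingWord_eq_mul_pow i i' (2 * j + 1)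
    rw [if_neg (by simp [Nat.even_add_one]), (by omega : (2 * j + 1) / 2 = j)] at hp1
    have hp2 := cs.prod_alternatingWord_eq_mul_pow i i' (2 * j + 1 + 1)
    rw [if_pos (by refine ⟨j + 1, by omega⟩), one_mul,
      (by omega : (2 * j + 1 + 1) / 2 = j + 1)] at hp2
    rw [hp1, hp2, mul_assoc (σ i') ((σ i * σ i') ^ j),
      (by omega : 2 * j + 1 = j + (j + 1)), hcancel j (j + 1), hsj' (j + 1),
      mul_assoc, cs.simple_mul_simple_self, mul_one]

/-- Closed form for the conjugates appearing in the inversion sequence of an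
alternating word. -/
lemma alt_conj_formula (i i' : B) (q : ℕ) :
    (π (CoxeterSystem.alternatingWord i i' q))⁻¹ * σ (altLetter i i' q)
      * π (CoxeterSystem.alternatingWord i i' q)
      = ((σ i * σ i')⁻¹) ^ q * σ i' := by
  have hrec : π (CoxeterSystem.alternatingWord i i' (q + 1))
      = σ (altLetter i i' q) * π (CoxeterSystem.alternatingWord i i' q) := by
    rw [CoxeterSystem.alternatingWord_succ', cs.wordProd_cons]
    rfl
  have hs : σ (altLetter i i' q)
      = π (CoxeterSystem.alternatingWord i i' (q + 1))
        * (π (CoxeterSystem.alternatingWord i i' q))⁻¹ := by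
    rw [hrec]
    group
  rw [hs, wordProd_alt_succ cs i i' q]
  group

/-- Entry formula for the right inversion sequence of an alternating word. -/
lemma getD_ris_alternatingWord (i i' : B) (n k : ℕ) (h : k < n) :
    (ris (CoxeterSystem.alternatingWord i i' n)).getD k 1
      = ((σ i * σ i')⁻¹) ^ (n - 1 - k) * σ i' := by
  rw [cs.getD_rightInvSeq, drop_alternatingWord]
  rw [get?_alternatingWord i i' n k h]
  have h2 : n - (k + 1) = n - 1 - k := by omega
  rw [h2]
  simp only [Option.map_some, Option.getD_some]
  exact alt_conj_formula cs i i' (n - 1 - k)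

/-- The right inversion sequence of the doubled braid word consists of two
identical halves. -/
lemma ris_alternating_double (i i' : B) :
    ris (CoxeterSystem.alternatingWord i i' (2 * M i i'))
      = ris (CoxeterSystem.alternatingWord i i' (M i i'))
        ++ ris (CoxeterSystem.alternatingWord i i' (M i i')) := by
  have hzm : ((σ i * σ i')⁻¹) ^ (M i i') = 1 := by
    rw [inv_pow, cs.simple_mul_simple_pow i i', inv_one]
  apply List.ext_getElem
  · simp
    omega
  · intro k h1 h2
    have hk2 : k < 2 * M i i' := by simpa using h1
    have hlen : ∀ p, (ris (CoxeterSystem.alternatingWord i i' p)).length = p := by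
      intro p; simp
    rw [← List.getD_eq_getElem _ 1, ← List.getD_eq_getElem _ 1]
    rw [getD_ris_alternatingWord cs i i' (2 * M i i') k hk2]
    by_cases hkm : k < M i i'
    · rw [List.getD_append _ _ 1 k (by rw [hlen]; exact hkm)]
      rw [getD_ris_alternatingWord cs i i' (M i i') k hkm]
      have harith : 2 * M i i' - 1 - k = (M i i' - 1 - k) + M i i' := by omega
      rw [harith, pow_add, hzm, mul_one]
    · have hge : M i i' ≤ k := le_of_not_gt hkm
      rw [List.getD_append_right _ _ 1 k (by rw [hlen]; exact hge)]
      rw [hlen]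
      rw [getD_ris_alternatingWord cs i i' (M i i') (k - M i i') (by omega)]
      have harith : 2 * M i i' - 1 - k = M i i' - 1 - (k - M i i') := by omega
      rw [harith]

lemma phi_liftable : CoxeterMatrix.IsLiftable M (phi cs) := by
  intro i i'
  rw [← prod_map_phi_alternating cs i i' (M i i')]
  apply Equiv.ext
  rintro ⟨t, e⟩
  rw [prod_phi_apply]
  have hπ : π (CoxeterSystem.alternatingWord i i' (2 * M i i')) = 1 := by
    rw [cs.prod_alternatingWord_eq_mul_pow]
    rw [if_pos (even_two_mul _), one_mul]
    have : 2 * M i i' / 2 = M i i' := by omega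
    rw [this, cs.simple_mul_simple_pow i i']
  have hflip : nflips (ris (CoxeterSystem.alternatingWord i i' (2 * M i i'))) t = 1 := by
    rw [ris_alternating_double cs i i', nflips_append, nflips_sq]
  rw [hπ, hflip, one_mul, inv_one, mul_one, one_mul]
  rfl

/-- The sign representation of `W` on `W × ℤˣ`. -/
def Phi : W →* Equiv.Perm (W × ℤˣ) := cs.lift ⟨phi cs, phi_liftable cs⟩

lemma Phi_wordProd (ω : List B) : Phi cs (π ω) = (ω.map (phi cs)).prod := by
  induction ω with
  | nil => simp [Phi]
  | cons i ω ih =>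
    rw [cs.wordProd_cons, map_mul, ih, List.map_cons, List.prod_cons]
    congr 1
    exact cs.lift_apply_simple (phi_liftable cs) i

/-- The parity of the number of occurrences of `t` in the right inversion sequence
depends only on the product of the word. -/
lemma nflips_ris_eq_of_wordProd_eq {ω ω' : List B} (h : π ω = π ω') (t : W) :
    nflips (ris ω) t = nflips (ris ω') t := by
  have h1 := prod_phi_apply cs ω t 1
  have h2 := prod_phi_apply cs ω' t 1
  rw [← Phi_wordProd cs ω] at h1
  rw [← Phi_wordProd cs ω'] at h2
  rw [h] at h1
  have h3 := congrArg Prod.snd (h1.symm.trans h2)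
  simpa using h3

end BA

end SignAction

/-! ### Strong exchange, deletion, subword property -/

section Exchange

open CoxeterSystem List

variable {B W : Type} [Group W] {M : CoxeterMatrix B} (cs : CoxeterSystem M W)

local prefix:100 "ℓ" => cs.length
local prefix:100 "σ" => cs.simple
local prefix:100 "π" => cs.wordProd
local prefix:100 "ris" => cs.rightInvSeq
local prefix:100 "lis" => cs.leftInvSeq

namespace BA

lemma ris_append (A Bd : List B) :
    ris (A ++ Bd) = (ris A).map (fun x => (π Bd)⁻¹ * x * π Bd) ++ ris Bd := by
  induction A with
  | nil => simp
  | cons a A ih =>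
    show ((π (A ++ Bd))⁻¹ * σ a * π (A ++ Bd)) :: ris (A ++ Bd)
      = ((π Bd)⁻¹ * ((π A)⁻¹ * σ a * π A) * π Bd) :: _
    rw [ih]
    congr 1
    rw [cs.wordProd_append, mul_inv_rev]
    group

lemma lis_eq_map_conj (ω : List B) :
    lis ω = (ris ω).map (fun x => π ω * x * (π ω)⁻¹) := by
  induction ω with
  | nil => simp
  | cons i ω ih =>
    show σ i :: List.map (⇑(MulAut.conj (σ i))) (lis ω) = _
    have hris : ris (i :: ω) = ((π ω)⁻¹ * σ i * π ω) :: ris ω := rfl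
    rw [hris, List.map_cons]
    congr 1
    · rw [cs.wordProd_cons, mul_inv_rev, cs.inv_simple]
      simp [mul_assoc, mul_inv_cancel_left, cs.simple_mul_simple_cancel_left]
    · rw [ih, List.map_map]
      apply List.map_congr_left
      intro x _
      simp only [Function.comp_apply, MulAut.conj_apply, cs.wordProd_cons, mul_inv_rev,
        cs.inv_simple]
      group

/-- Strong exchange property (membership form). -/
lemma exchange_mem {ω : List B} {t : W} (ht : cs.IsReflection t)
    (hred : cs.IsReduced ω) (hlt : ℓ (π ω * t) < ℓ (π ω)) : t ∈ ris ω := by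
  obtain ⟨v, j, hvj⟩ := ht
  have ht : cs.IsReflection t := ⟨v, j, hvj⟩
  obtain ⟨γ, hγr, hγ⟩ := cs.exists_reduced_word' v
  obtain ⟨α, hαr, hα⟩ := cs.exists_reduced_word' (π ω * t)
  have htt : t * t = 1 := ht.mul_self
  set β : List B := γ ++ ([j] ++ γ.reverse) with hβ
  have hπβ : π β = t := by
    rw [hβ, cs.wordProd_append, cs.wordProd_append, cs.wordProd_singleton,
      cs.wordProd_reverse, ← hγ, hvj]
    group
  have hπ : π (α ++ β) = π ω := by
    rw [cs.wordProd_append, hπβ, ← hα, mul_assoc, htt, mul_one]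
  have hB : π ([j] ++ γ.reverse) = σ j * v⁻¹ := by
    rw [cs.wordProd_append, cs.wordProd_singleton, cs.wordProd_reverse, ← hγ]
  -- part 1 : flips along α
  have hnotmemα : t ∉ ris α := by
    intro hmem
    have h2 := (cs.isRightInversion_of_mem_rightInvSeq hαr hmem).2
    rw [← hα, mul_assoc, htt, mul_one] at h2
    omega
  have hA : nflips ((ris α).map (fun x => (π β)⁻¹ * x * π β)) t = 1 := by
    rw [nflips_map_of_iff (t' := t) ?_, nflips_of_not_mem hnotmemα]
    intro x
    constructor
    · intro e
      have h0 : x = π β * ((π β)⁻¹ * x * π β) * (π β)⁻¹ := by group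
      rw [e, hπβ] at h0
      rw [h0, htt, one_mul, ht.inv]
    · intro e
      rw [e, hπβ, inv_mul_cancel, one_mul]
  -- part 2 : flips along β
  have hmapj : nflips ((ris γ).map
      (fun x => (π ([j] ++ γ.reverse))⁻¹ * x * π ([j] ++ γ.reverse))) t
      = nflips (ris γ) (σ j) := by
    apply nflips_map_of_iff
    intro x
    rw [hB]
    constructor
    · intro e
      have h0 : x = (σ j * v⁻¹) * ((σ j * v⁻¹)⁻¹ * x * (σ j * v⁻¹)) * (σ j * v⁻¹)⁻¹ := by
        group
      rw [e] at h0
      rw [h0, hvj, mul_inv_rev, inv_inv, cs.inv_simple]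
      simp [mul_assoc, inv_mul_cancel_left, cs.simple_mul_simple_cancel_left]
    · intro e
      rw [e, hvj, mul_inv_rev, inv_inv, cs.inv_simple]
      simp [mul_assoc, inv_mul_cancel_left, cs.simple_mul_simple_cancel_left]
  have hrev : nflips (ris (γ.reverse)) t = nflips (ris γ) (σ j) := by
    rw [cs.rightInvSeq_reverse, nflips_reverse, lis_eq_map_conj]
    apply nflips_map_of_iff
    intro x
    rw [← hγ, hvj]
    constructor
    · intro e
      have h0 : x = v⁻¹ * (v * x * v⁻¹) * v := by group
      rw [e] at h0
      rw [h0]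
      group
    · intro e
      rw [e]
  have hβflip : nflips (ris β) t = -1 := by
    rw [hβ, ris_append, nflips_append, ris_append, nflips_append]
    rw [cs.rightInvSeq_singleton, List.map_singleton]
    have h2 : nflips ([(π γ.reverse)⁻¹ * σ j * π γ.reverse]) t = -1 := by
      have he : (π γ.reverse)⁻¹ * σ j * π γ.reverse = t := by
        rw [cs.wordProd_reverse, ← hγ, hvj]
        group
      rw [nflips_cons, if_pos he, nflips_nil, mul_one]
    rw [hmapj, h2, hrev, mul_left_comm, nflips_sq, mul_one]
  have hfinal : nflips (ris ω) t = -1 := by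
    rw [nflips_ris_eq_of_wordProd_eq cs hπ.symm t, ris_append, nflips_append, hA,
      hβflip, one_mul]
  by_contra hmem
  rw [nflips_of_not_mem hmem] at hfinal
  exact absurd hfinal (by decide)

/-- Strong exchange property (product form). -/
lemma exchange {ω : List B} {t : W} (ht : cs.IsReflection t)
    (hred : cs.IsReduced ω) (hlt : ℓ (π ω * t) < ℓ (π ω)) :
    ∃ k, k < ω.length ∧ π ω * t = π (ω.eraseIdx k) := by
  have hmem := exchange_mem cs ht hred hlt
  obtain ⟨k, hk, he⟩ := List.getElem_of_mem hmem
  have hk' : k < ω.length := by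
    rw [cs.length_rightInvSeq] at hk
    exact hk
  refine ⟨k, hk', ?_⟩
  have : (ris ω).getD k 1 = t := by
    rw [List.getD_eq_getElem _ 1 hk, he]
  rw [← this, cs.wordProd_mul_getD_rightInvSeq]

/-- Deletion property: every word has a reduced sublist with the same product. -/
lemma deletion (ω : List B) : ∃ ζ, ζ.Sublist ω ∧ cs.IsReduced ζ ∧ π ζ = π ω := by
  generalize hn : ω.length = n
  induction n using Nat.strong_induction_on generalizing ω with
  | _ n ih =>
  by_cases hred : cs.IsReduced ω
  · exact ⟨ω, List.Sublist.refl ω, hred, rfl⟩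
  · have h0 : ∃ m, ¬ cs.IsReduced (ω.take m) := ⟨ω.length, by rwa [List.take_length]⟩
    have hj0pos : 0 < Nat.find h0 := by
      rcases Nat.eq_zero_or_pos (Nat.find h0) with h | h
      · exfalso
        have hspec := Nat.find_spec h0
        rw [h, List.take_zero] at hspec
        exact hspec (by simp [CoxeterSystem.IsReduced])
      · exact h
    set j := Nat.find h0 - 1 with hjdef
    have hjlt0 : j < Nat.find h0 := by omega
    have hjred : cs.IsReduced (ω.take j) := not_not.mp (Nat.find_min h0 hjlt0)
    have hj1 : ¬ cs.IsReduced (ω.take (j + 1)) := by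
      have he : j + 1 = Nat.find h0 := by omega
      rw [he]
      exact Nat.find_spec h0
    have hjlt : j < ω.length := by
      by_contra hc
      push_neg at hc
      rw [List.take_of_length_le hc] at hjred
      exact hred hjred
    have htake : ω.take (j + 1) = ω.take j ++ [ω[j]] := by
      rw [List.take_succ, List.getElem?_eq_getElem hjlt]
      rfl
    have hprod : π (ω.take (j + 1)) = π (ω.take j) * σ (ω[j]) := by
      rw [htake, cs.wordProd_append, cs.wordProd_singleton]
    have hjr : ℓ (π (ω.take j)) = j := by
      have h2 := hjred
      unfold CoxeterSystem.IsReduced at h2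
      rw [List.length_take, min_eq_left (by omega)] at h2
      exact h2
    have hlen : ℓ (π (ω.take j) * σ (ω[j])) < ℓ (π (ω.take j)) := by
      have hne := cs.length_mul_simple (π (ω.take j)) (ω[j])
      have hle : ℓ (π (ω.take (j + 1))) ≤ j + 1 := by
        have h3 := cs.length_wordProd_le (ω.take (j + 1))
        rw [List.length_take, min_eq_left (by omega)] at h3
        exact h3
      have hne2 : ℓ (π (ω.take (j + 1))) ≠ j + 1 := by
        intro e
        apply hj1
        unfold CoxeterSystem.IsReduced
        rw [e, List.length_take, min_eq_left (by omega)]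
      rw [hprod] at hle hne2
      omega
    obtain ⟨k, hk, hek⟩ := exchange cs (cs.isReflection_simple (ω[j])) hjred hlen
    have hπ' : π ((ω.take j).eraseIdx k ++ ω.drop (j + 1)) = π ω := by
      rw [cs.wordProd_append, ← hek, ← hprod]
      conv_rhs => rw [← List.take_append_drop (j + 1) ω]
      rw [cs.wordProd_append]
    have hsub1 : ((ω.take j).eraseIdx k).Sublist (ω.take (j + 1)) := by
      refine (List.eraseIdx_sublist _ k).trans ?_
      rw [htake]
      exact List.sublist_append_left _ _
    have hsub : ((ω.take j).eraseIdx k ++ ω.drop (j + 1)).Sublist ω := by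
      conv_rhs => rw [← List.take_append_drop (j + 1) ω]
      exact List.Sublist.append hsub1 (List.Sublist.refl _)
    have hk2 : k < (ω.take j).length := hk
    have hlen' : ((ω.take j).eraseIdx k ++ ω.drop (j + 1)).length < n := by
      have h1 := List.length_eraseIdx_add_one hk2
      have h2 : (ω.drop (j + 1)).length = ω.length - (j + 1) := List.length_drop
      rw [List.length_append]
      rw [List.length_take, min_eq_left (by omega)] at h1
      omega
    obtain ⟨ζ, hζ1, hζ2, hζ3⟩ := ih _ hlen' _ rfl
    exact ⟨ζ, hζ1.trans hsub, hζ2, by rw [hζ3, hπ']⟩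

end BA

end Exchange

/-! ### The lifting properties of the Bruhat order -/

section Lifting

open CoxeterSystem List

variable {B W : Type} [Group W] {M : CoxeterMatrix B} (cs : CoxeterSystem M W)

local prefix:100 "ℓ" => cs.length
local prefix:100 "σ" => cs.simple
local prefix:100 "π" => cs.wordProd

namespace BA

lemma desc_eq {z : W} {r : B} (h : ℓ (z * σ r) < ℓ z) : ℓ (z * σ r) + 1 = ℓ z := by
  have := cs.length_mul_simple z r
  omega

lemma asc_eq {z : W} {r : B} (h : ℓ z < ℓ (z * σ r)) : ℓ (z * σ r) = ℓ z + 1 := by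
  have := cs.length_mul_simple z r
  omega

lemma brle_desc_right {z : W} {r : B} (h : ℓ (z * σ r) < ℓ z) : BrLe cs (z * σ r) z := by
  have h2 := brle_step_right cs (cs.isReflection_simple r) (u := z * σ r)
    (by rw [cs.simple_mul_simple_cancel_right]; omega)
  rwa [cs.simple_mul_simple_cancel_right] at h2

lemma brle_asc_right {z : W} {r : B} (h : ℓ z < ℓ (z * σ r)) : BrLe cs z (z * σ r) :=
  brle_step_right cs (cs.isReflection_simple r) (le_of_lt h)

/-- Sublists of a reduced word of `w` give elements below `w` in Bruhat order,
with a cap on `w`'s length (statement for the induction). -/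
def SubS (n : ℕ) : Prop := ∀ ω : List B, cs.IsReduced ω → ω.length ≤ n →
  ∀ ζ : List B, ζ.Sublist ω → BrLe cs (π ζ) (π ω)

def LiftA (n : ℕ) : Prop := ∀ w z : W, ∀ r : B, ℓ w ≤ n → BrLe cs z w →
  ℓ (z * σ r) < ℓ z → ℓ (w * σ r) < ℓ w → BrLe cs (z * σ r) (w * σ r)

def LiftB (n : ℕ) : Prop := ∀ w z : W, ∀ r : B, ℓ w ≤ n → BrLe cs z w →
  ℓ z < ℓ (z * σ r) → ℓ (w * σ r) < ℓ w → BrLe cs z (w * σ r)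

def LiftC (n : ℕ) : Prop := ∀ w z : W, ∀ r : B, ℓ w ≤ n → ℓ (w * σ r) < ℓ w →
  ℓ z < ℓ (z * σ r) → BrLe cs z (w * σ r) → BrLe cs (z * σ r) w

def LiftL (n : ℕ) : Prop := ∀ w z : W, ∀ r : B, ℓ w ≤ n → BrLe cs z w →
  ℓ z < ℓ (z * σ r) → ℓ w < ℓ (w * σ r) → BrLe cs (z * σ r) (w * σ r)

lemma liftL_left {n : ℕ} (h : LiftL cs n) {v z : W} {i : B} (hn : ℓ v ≤ n)
    (hle : BrLe cs z v) (hz : ℓ z < ℓ (σ i * z)) (hv : ℓ v < ℓ (σ i * v)) :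
    BrLe cs (σ i * z) (σ i * v) := by
  have e1 : ∀ x : W, x⁻¹ * σ i = (σ i * x)⁻¹ := by
    intro x
    rw [mul_inv_rev, cs.inv_simple]
  have h2 := h v⁻¹ z⁻¹ i (by rwa [cs.length_inv]) (brle_inv cs hle)
    (by rw [e1, cs.length_inv, cs.length_inv]; exact hz)
    (by rw [e1, cs.length_inv, cs.length_inv]; exact hv)
  rw [e1, e1] at h2
  have h3 := brle_inv cs h2
  rwa [inv_inv, inv_inv] at h3

/-- The main simultaneous induction establishing the lifting properties. -/
lemma pkg : ∀ n : ℕ, LiftA cs n ∧ LiftB cs n ∧ LiftC cs n ∧ LiftL cs n ∧ SubS cs n := by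
  intro n
  induction n using Nat.strong_induction_on with
  | _ n ih =>
  have hS : SubS cs n := by
    intro ω hred hlen ζ hsub
    obtain ⟨ζ', hζ'sub, hζ'red, hζ'π⟩ := deletion cs ζ
    rw [← hζ'π]
    replace hsub := hζ'sub.trans hsub
    clear hζ'sub hζ'π
    match ω, hred, hlen, hsub with
    | [], _, _, hsub =>
      rw [List.sublist_nil.mp hsub]
      exact brle_refl cs _
    | i :: α, hred, hlen, hsub =>
      have hn1 : α.length < n := by
        simp only [List.length_cons] at hlen
        omega
      have hαred : cs.IsReduced α := by
        have h2 := CoxeterSystem.IsReduced.drop (cs := cs) (ω := i :: α) hred 1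
        simpa using h2
      have hαlen : ℓ (π α) = α.length := hαred
      have hωlen : ℓ (π (i :: α)) = α.length + 1 := by
        have h2 : (i :: α).length = α.length + 1 := rfl
        rw [hred, h2]
      cases hsub with
      | cons _ h =>
        have h1 : BrLe cs (π ζ') (π α) :=
          (ih α.length hn1).2.2.2.2 α hαred le_rfl ζ' h
        refine brle_trans cs h1 ?_
        rw [cs.wordProd_cons]
        apply brle_step_left cs (cs.isReflection_simple i)
        rw [← cs.wordProd_cons]
        omega
      | cons_cons _ h =>
        rename_i β
        have hβred : cs.IsReduced β := by
          have h2 := CoxeterSystem.IsReduced.drop (cs := cs) (ω := i :: β) hζ'red 1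
          simpa using h2
        have hb : BrLe cs (π β) (π α) :=
          (ih α.length hn1).2.2.2.2 α hαred le_rfl β h
        have hζlen : ℓ (π (i :: β)) = β.length + 1 := by
          have h2 : (i :: β).length = β.length + 1 := rfl
          rw [hζ'red, h2]
        rw [cs.wordProd_cons, cs.wordProd_cons]
        apply liftL_left cs (ih α.length hn1).2.2.2.1 (le_of_eq hαlen) hb
        · rw [← cs.wordProd_cons]
          have : ℓ (π β) = β.length := hβred
          omega
        · rw [← cs.wordProd_cons]
          omega
  have hAB : ∀ w z : W, ∀ r : B, ℓ w ≤ n → BrLe cs z w → ℓ (w * σ r) < ℓ w →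
      ((ℓ (z * σ r) < ℓ z → BrLe cs (z * σ r) (w * σ r)) ∧
        (ℓ z < ℓ (z * σ r) → BrLe cs z (w * σ r))) := by
    intro w z r hwn hle hwr
    induction hle using Relation.ReflTransGen.head_induction_on with
    | refl =>
      refine ⟨fun _ => brle_refl cs _, fun hasc => absurd hwr (by omega)⟩
    | head step rest ihz =>
      rename_i a c
      obtain ⟨hlen, t, ht | rfl, rfl⟩ := step
      case inr => simp only [one_mul] at ihz ⊢; exact ihz
      have hlt_a : ℓ a < ℓ (t * a) := lt_of_le_of_ne hlen (ht.length_mul_right_ne a).symm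
      have hstep_a : BrLe cs a (t * a) := brle_step_left cs ht hlen
      constructor
      · intro hdz
        by_cases hzw : t * a = w
        · have hstep : w * σ r = t * (a * σ r) := by rw [← hzw]; group
          rw [hstep]
          apply brle_step_left cs ht
          rw [← hstep]
          have e1 := desc_eq cs hdz
          have e2 := desc_eq cs hwr
          have e3 : ℓ (t * a) = ℓ w := by rw [hzw]
          omega
        · have hz'lt : ℓ (t * a) < ℓ w := brlt_length_lt cs rest hzw
          rcases Nat.lt_or_ge (ℓ (t * a * σ r)) (ℓ (t * a)) with hd' | ha'
          · have h1 : BrLe cs (a * σ r) (t * a * σ r) :=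
              (ih (ℓ (t * a)) (by omega)).1 (t * a) a r le_rfl hstep_a hdz hd'
            exact brle_trans cs h1 (ihz.1 hd')
          · have ha'' : ℓ (t * a) < ℓ (t * a * σ r) :=
              lt_of_le_of_ne ha' (cs.length_mul_simple_ne (t * a) r).symm
            have h1 : BrLe cs (t * a) (w * σ r) := ihz.2 ha''
            exact brle_trans cs (brle_trans cs (brle_desc_right cs hdz) hstep_a) h1
      · intro hasc
        rcases Nat.lt_or_ge (ℓ (t * a * σ r)) (ℓ (t * a)) with hd' | ha'
        · by_cases hzw : t * a = w
          · -- exchange case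
            obtain ⟨γ, hγred, hγ⟩ := cs.exists_reduced_word' (w * σ r)
            have hγlen : γ.length = ℓ (w * σ r) := by
              have h2 : ℓ (π γ) = γ.length := hγred
              rw [← hγ] at h2
              omega
            have hπω : π (γ ++ [r]) = w := by
              rw [cs.wordProd_append, cs.wordProd_singleton, ← hγ,
                cs.simple_mul_simple_cancel_right]
            have hωred : cs.IsReduced (γ ++ [r]) := by
              unfold CoxeterSystem.IsReduced
              rw [hπω, List.length_append]
              have := desc_eq cs hwr
              simp only [List.length_singleton]
              omega
            have hth : cs.IsReflection (w⁻¹ * t * w) := by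
              have h2 := ht.conj w⁻¹
              rwa [inv_inv] at h2
            have ha_eq : a = t * w := by
              rw [← hzw, ← mul_assoc, ht.mul_self, one_mul]
            have hprod : π (γ ++ [r]) * (w⁻¹ * t * w) = a := by
              rw [hπω, ha_eq]
              group
            have hlen2 : ℓ (π (γ ++ [r]) * (w⁻¹ * t * w)) < ℓ (π (γ ++ [r])) := by
              rw [hprod, hπω]
              have e3 : ℓ (t * a) = ℓ w := by rw [hzw]
              omega
            obtain ⟨k, hk, hek⟩ := exchange cs hth hωred hlen2
            rw [hprod] at hek
            by_cases hkγ : k < γ.length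
            · have herase : (γ ++ [r]).eraseIdx k = γ.eraseIdx k ++ [r] :=
                List.eraseIdx_append_of_lt_length hkγ [r]
              rw [herase] at hek
              have haσ : a * σ r = π (γ.eraseIdx k) := by
                rw [hek, cs.wordProd_append, cs.wordProd_singleton,
                  cs.simple_mul_simple_cancel_right]
              obtain ⟨μ, hμsub, hμred, hμπ⟩ := deletion cs (γ.eraseIdx k)
              have hsubγ : μ.Sublist γ := hμsub.trans (List.eraseIdx_sublist γ k)
              have h1 : BrLe cs (π μ) (π γ) :=
                (ih (ℓ (w * σ r)) (by omega)).2.2.2.2 γ hγred (le_of_eq hγlen) μ hsubγ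
              have h2 : π μ = a * σ r := by rw [hμπ, haσ]
              rw [h2, ← hγ] at h1
              exact brle_trans cs (brle_asc_right cs hasc) h1
            · have hkeq : k = γ.length := by
                have h2 : k < (γ ++ [r]).length := hk
                rw [List.length_append, List.length_singleton] at h2
                omega
              have herase : (γ ++ [r]).eraseIdx k = γ := by
                rw [hkeq, List.eraseIdx_append_of_length_le (le_refl γ.length)]
                simp
              rw [herase, ← hγ] at hek
              rw [hek]
              exact brle_refl cs _
          · have hz'lt : ℓ (t * a) < ℓ w := brlt_length_lt cs rest hzw
            have h1 : BrLe cs a (t * a * σ r) :=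
              (ih (ℓ (t * a)) (by omega)).2.1 (t * a) a r le_rfl hstep_a hasc hd'
            exact brle_trans cs h1 (ihz.1 hd')
        · have ha'' : ℓ (t * a) < ℓ (t * a * σ r) :=
            lt_of_le_of_ne ha' (cs.length_mul_simple_ne (t * a) r).symm
          exact brle_trans cs hstep_a (ihz.2 ha'')
  have hA : LiftA cs n := fun w z r hwn hle hdz hwr => (hAB w z r hwn hle hwr).1 hdz
  have hB : LiftB cs n := fun w z r hwn hle hasc hwr => (hAB w z r hwn hle hwr).2 hasc
  have hC : LiftC cs n := by
    intro w z r hwn hwr hasc hle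
    have main : ∀ a : W, BrLe cs a (w * σ r) → ℓ a < ℓ (a * σ r) → BrLe cs (a * σ r) w := by
      intro a hlea
      induction hlea using Relation.ReflTransGen.head_induction_on with
      | refl =>
        intro _
        rw [cs.simple_mul_simple_cancel_right]
        exact brle_refl cs _
      | head step rest ihz =>
        rename_i a c
        obtain ⟨hlen, t, ht | rfl, rfl⟩ := step
        case inr => simp only [one_mul] at ihz ⊢; exact ihz
        intro hasc_a
        have hlt_a : ℓ a < ℓ (t * a) := lt_of_le_of_ne hlen (ht.length_mul_right_ne a).symm
        have hstep_a : BrLe cs a (t * a) := brle_step_left cs ht hlen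
        have hz'le : ℓ (t * a) ≤ ℓ (w * σ r) := brle_length_le cs rest
        have hz'n : ℓ (t * a) < n := by
          have := desc_eq cs hwr
          omega
        rcases Nat.lt_or_ge (ℓ (t * a * σ r)) (ℓ (t * a)) with hd' | ha'
        · have h1 : BrLe cs a (t * a * σ r) :=
            (ih (ℓ (t * a)) hz'n).2.1 (t * a) a r le_rfl hstep_a hasc_a hd'
          have h2 : BrLe cs (a * σ r) (t * a) :=
            (ih (ℓ (t * a)) hz'n).2.2.1 (t * a) a r le_rfl hd' hasc_a h1
          exact brle_trans cs h2 (brle_trans cs rest (brle_desc_right cs hwr))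
        · have ha'' : ℓ (t * a) < ℓ (t * a * σ r) :=
            lt_of_le_of_ne ha' (cs.length_mul_simple_ne (t * a) r).symm
          have h1 : BrLe cs (a * σ r) (t * a * σ r) :=
            (ih (ℓ (t * a)) hz'n).2.2.2.1 (t * a) a r le_rfl hstep_a hasc_a ha''
          exact brle_trans cs h1 (ihz ha'')
    exact main z hle hasc
  have hL : LiftL cs n := by
    intro w z r hwn hle hasc hwasc
    have main : ∀ a : W, BrLe cs a w → ℓ a < ℓ (a * σ r) → BrLe cs (a * σ r) (w * σ r) := by
      intro a hlea
      induction hlea using Relation.ReflTransGen.head_induction_on with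
      | refl => intro _; exact brle_refl cs _
      | head step rest ihz =>
        rename_i a c
        obtain ⟨hlen, t, ht | rfl, rfl⟩ := step
        case inr => simp only [one_mul] at ihz ⊢; exact ihz
        intro hasc_a
        have hlt_a : ℓ a < ℓ (t * a) := lt_of_le_of_ne hlen (ht.length_mul_right_ne a).symm
        have hstep_a : BrLe cs a (t * a) := brle_step_left cs ht hlen
        by_cases hzw : t * a = w
        · have hstep : w * σ r = t * (a * σ r) := by rw [← hzw]; group
          rw [hstep]
          apply brle_step_left cs ht
          rw [← hstep]
          have e1 := asc_eq cs hasc_a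
          have e2 := asc_eq cs hwasc
          have e3 : ℓ (t * a) = ℓ w := by rw [hzw]
          omega
        · have hz'lt : ℓ (t * a) < ℓ w := brlt_length_lt cs rest hzw
          rcases Nat.lt_or_ge (ℓ (t * a * σ r)) (ℓ (t * a)) with hd' | ha'
          · have h1 : BrLe cs a (t * a * σ r) :=
              (ih (ℓ (t * a)) (by omega)).2.1 (t * a) a r le_rfl hstep_a hasc_a hd'
            have h2 : BrLe cs (a * σ r) (t * a) :=
              (ih (ℓ (t * a)) (by omega)).2.2.1 (t * a) a r le_rfl hd' hasc_a h1
            exact brle_trans cs h2 (brle_trans cs rest (brle_asc_right cs hwasc))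
          · have ha'' : ℓ (t * a) < ℓ (t * a * σ r) :=
              lt_of_le_of_ne ha' (cs.length_mul_simple_ne (t * a) r).symm
            have h1 : BrLe cs (a * σ r) (t * a * σ r) :=
              (ih (ℓ (t * a)) (by omega)).2.2.2.1 (t * a) a r le_rfl hstep_a hasc_a ha''
            exact brle_trans cs h1 (ihz ha'')
    exact main z hle hasc
  exact ⟨hA, hB, hC, hL, hS⟩

/-- Lifting property (double descent). -/
lemma liftA {z w : W} {r : B} (hle : BrLe cs z w) (hz : ℓ (z * σ r) < ℓ z)
    (hw : ℓ (w * σ r) < ℓ w) : BrLe cs (z * σ r) (w * σ r) :=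
  (pkg cs (ℓ w)).1 w z r le_rfl hle hz hw

/-- Lifting property (ascent-descent). -/
lemma liftB {z w : W} {r : B} (hle : BrLe cs z w) (hz : ℓ z < ℓ (z * σ r))
    (hw : ℓ (w * σ r) < ℓ w) : BrLe cs z (w * σ r) :=
  (pkg cs (ℓ w)).2.1 w z r le_rfl hle hz hw

/-- Lifting property (property Z). -/
lemma liftC {z w : W} {r : B} (hw : ℓ (w * σ r) < ℓ w) (hz : ℓ z < ℓ (z * σ r))
    (hle : BrLe cs z (w * σ r)) : BrLe cs (z * σ r) w :=
  (pkg cs (ℓ w)).2.2.1 w z r le_rfl hw hz hle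

/-- Lifting property (double ascent). -/
lemma liftL {z w : W} {r : B} (hle : BrLe cs z w) (hz : ℓ z < ℓ (z * σ r))
    (hw : ℓ w < ℓ (w * σ r)) : BrLe cs (z * σ r) (w * σ r) :=
  (pkg cs (ℓ w)).2.2.2.1 w z r le_rfl hle hz hw

end BA

end Lifting

/-! ### The weak order lemma and the technical lemma -/

section Technical

open CoxeterSystem List

variable {B W : Type} [Group W] {M : CoxeterMatrix B} (cs : CoxeterSystem M W)

local prefix:100 "ℓ" => cs.length
local prefix:100 "σ" => cs.simple
local prefix:100 "π" => cs.wordProd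
local prefix:100 "ris" => cs.rightInvSeq

namespace BA

/-- If `y` is a suffix of `u`, `r` is a right descent of `u` but a right ascent
of `y`, then `y` is still a suffix of `u * r`. -/
lemma wkle_mul_simple {u y : W} {r : B} (hwk : WkLe cs y u)
    (hur : ℓ (u * σ r) < ℓ u) (hyr : ℓ y < ℓ (y * σ r)) : WkLe cs y (u * σ r) := by
  obtain ⟨ξ, hξred, hξ⟩ := cs.exists_reduced_word' (u * y⁻¹)
  obtain ⟨η, hηred, hη⟩ := cs.exists_reduced_word' y
  have hwk' : ℓ (u * y⁻¹) + ℓ y = ℓ u := hwk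
  have hπ : π (ξ ++ η) = u := by
    rw [cs.wordProd_append, ← hξ, ← hη]
    group
  have hξlen : ξ.length = ℓ (u * y⁻¹) := by
    have h2 : ℓ (π ξ) = ξ.length := hξred
    rw [← hξ] at h2
    omega
  have hηlen : η.length = ℓ y := by
    have h2 : ℓ (π η) = η.length := hηred
    rw [← hη] at h2
    omega
  have hωred : cs.IsReduced (ξ ++ η) := by
    unfold CoxeterSystem.IsReduced
    rw [hπ, List.length_append]
    omega
  have hmem : σ r ∈ ris (ξ ++ η) := by
    apply exchange_mem cs (cs.isReflection_simple r) hωred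
    rw [hπ]
    exact hur
  rw [ris_append] at hmem
  rcases List.mem_append.mp hmem with hmem1 | hmem2
  · -- the erased letter is in ξ : conclude
    obtain ⟨x, hx, hxe⟩ := List.mem_map.mp hmem1
    obtain ⟨k, hk, hek⟩ := List.getElem_of_mem hx
    have hk' : k < ξ.length := by rwa [cs.length_rightInvSeq] at hk
    have hgd : (ris ξ).getD k 1 = x := by rw [List.getD_eq_getElem _ 1 hk, hek]
    have hπx : π ξ * x = π (ξ.eraseIdx k) := by
      rw [← hgd, cs.wordProd_mul_getD_rightInvSeq]
    -- u * σ r * y⁻¹ = π ξ * x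
    have hkey : u * σ r * y⁻¹ = π (ξ.eraseIdx k) := by
      rw [← hπx, ← hxe, ← hπ, cs.wordProd_append, ← hη]
      group
    have hlen1 : ℓ (u * σ r * y⁻¹) ≤ ℓ (u * y⁻¹) - 1 := by
      rw [hkey]
      have h3 := cs.length_wordProd_le (ξ.eraseIdx k)
      have h4 := List.length_eraseIdx_add_one hk'
      omega
    have hlen2 : ℓ (u * σ r) ≤ ℓ (u * σ r * y⁻¹) + ℓ y := by
      have h3 := cs.length_mul_le (u * σ r * y⁻¹) y
      rw [inv_mul_cancel_right] at h3
      exact h3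
    have hurlen : ℓ (u * σ r) + 1 = ℓ u := desc_eq cs hur
    have hlen3 : ℓ (u * σ r * y⁻¹) + ℓ y ≤ ℓ (u * σ r) := by omega
    unfold WkLe
    omega
  · -- the erased letter is in η : contradiction with the ascent
    exfalso
    obtain ⟨k, hk, hek⟩ := List.getElem_of_mem hmem2
    have hk' : k < η.length := by rwa [cs.length_rightInvSeq] at hk
    have hgd : (ris η).getD k 1 = σ r := by rw [List.getD_eq_getElem _ 1 hk, hek]
    have hπx : π η * σ r = π (η.eraseIdx k) := by
      rw [← hgd, cs.wordProd_mul_getD_rightInvSeq]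
    have h3 := cs.length_wordProd_le (η.eraseIdx k)
    have h4 := List.length_eraseIdx_add_one hk'
    rw [← hπx, ← hη] at h3
    omega

/-- The key technical lemma (Statement 13): if `y` and `w` are suffixes of `u`,
`sw > w`, `sw` is not a suffix of `u` (expressed via `vs > v`), and `y < sw`
in Bruhat order, then `y ≤ w`. -/
lemma tech : ∀ n : ℕ, ∀ u w y : W, ∀ s : B, ℓ u ≤ n →
    WkLe cs y u → WkLe cs w u → ℓ (σ s * w) = ℓ w + 1 →
    ℓ (u * w⁻¹ * σ s) = ℓ (u * w⁻¹) + 1 →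
    BrLe cs y (σ s * w) → y ≠ σ s * w → BrLe cs y w := by
  intro n
  induction n with
  | zero =>
    intro u w y s hun hy hw _ _ _ _
    have hwk1 : ℓ (u * w⁻¹) + ℓ w = ℓ u := hw
    have hwk2 : ℓ (u * y⁻¹) + ℓ y = ℓ u := hy
    have hyone : y = 1 := by
      rw [← cs.length_eq_zero_iff]
      omega
    have hwone : w = 1 := by
      rw [← cs.length_eq_zero_iff]
      omega
    rw [hyone, hwone]
    exact brle_refl cs 1
  | succ n ihn =>
    intro u w y s hun hy hw hsw hvs hylt hyne
    by_cases hw1 : w = 1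
    · subst hw1
      have hylen : ℓ y < ℓ (σ s * 1) := brlt_length_lt cs hylt hyne
      rw [mul_one, cs.length_simple] at hylen
      have hyone : y = 1 := by
        rw [← cs.length_eq_zero_iff]
        omega
      rw [hyone]
      exact brle_refl cs 1
    · obtain ⟨r, hr⟩ := cs.exists_rightDescent_of_ne_one hw1
      have hrd : ℓ (w * σ r) < ℓ w := hr
      have hwk1 : ℓ (u * w⁻¹) + ℓ w = ℓ u := hw
      have hwk2 : ℓ (u * y⁻¹) + ℓ y = ℓ u := hy
      have hwrd : ℓ (w * σ r) + 1 = ℓ w := desc_eq cs hrd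
      have hwpos : 1 ≤ ℓ w := by
        rcases Nat.eq_zero_or_pos (ℓ w) with h0 | h0
        · exact absurd (cs.length_eq_zero_iff.mp h0) hw1
        · exact h0
      have hur : ℓ (u * σ r) < ℓ u := by
        have e1 : u * σ r = (u * w⁻¹) * (w * σ r) := by group
        have h1 : ℓ ((u * w⁻¹) * (w * σ r)) ≤ ℓ (u * w⁻¹) + ℓ (w * σ r) :=
          cs.length_mul_le _ _
        rw [← e1] at h1
        omega
      have hurd : ℓ (u * σ r) + 1 = ℓ u := desc_eq cs hur
      have hvq : (u * σ r) * (w * σ r)⁻¹ = u * w⁻¹ := by group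
      have hw' : WkLe cs (w * σ r) (u * σ r) := by
        unfold WkLe
        rw [hvq]
        omega
      have hvs' : ℓ ((u * σ r) * (w * σ r)⁻¹ * σ s) = ℓ ((u * σ r) * (w * σ r)⁻¹) + 1 := by
        rw [hvq]
        exact hvs
      have e3 : (σ s * w) * σ r = σ s * (w * σ r) := mul_assoc _ _ _
      have hswr_lt : ℓ ((σ s * w) * σ r) < ℓ (σ s * w) := by
        have h1 := cs.length_simple_mul (w * σ r) s
        rw [e3]
        omega
      have e5 : (u * σ r) * (σ s * (w * σ r))⁻¹ = u * w⁻¹ * σ s := by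
        rw [show (σ s * (w * σ r))⁻¹ = (w * σ r)⁻¹ * (σ s)⁻¹ from mul_inv_rev _ _,
          cs.inv_simple]
        group
      -- in the ascent subcase, `σ s * (w * σ r)` is not a suffix of `u * σ r`
      have hnotwk : ℓ (σ s * (w * σ r)) = ℓ (w * σ r) + 1 →
          ¬ WkLe cs (σ s * (w * σ r)) (u * σ r) := by
        intro hcase hcon
        have h1 : ℓ ((u * σ r) * (σ s * (w * σ r))⁻¹) + ℓ (σ s * (w * σ r)) = ℓ (u * σ r) :=
          hcon
        rw [e5, hvs, hcase] at h1
        omega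
      have hdesc_step : ℓ (σ s * (w * σ r)) + 1 = ℓ (w * σ r) →
          BrLe cs (σ s * (w * σ r)) (w * σ r) := by
        intro hcase
        have h2 := brle_step_left cs (cs.isReflection_simple s) (u := σ s * (w * σ r))
          (by rw [cs.simple_mul_simple_cancel_left]; omega)
        rwa [cs.simple_mul_simple_cancel_left] at h2
      have hfinish : BrLe cs (y * σ r) (w * σ r) → ℓ (y * σ r) < ℓ y → BrLe cs y w := by
        intro hle' hyr
        have h1 := liftL cs hle' (z := y * σ r) (w := w * σ r) (r := r)
          (by rw [cs.simple_mul_simple_cancel_right]; omega)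
          (by rw [cs.simple_mul_simple_cancel_right]; omega)
        rwa [cs.simple_mul_simple_cancel_right, cs.simple_mul_simple_cancel_right] at h1
      rcases Nat.lt_or_ge (ℓ (y * σ r)) (ℓ y) with hyr | hyr'
      · -- Case A : r is a descent of y
        have hy' : BrLe cs (y * σ r) (σ s * (w * σ r)) := by
          have h1 := liftA cs hylt hyr hswr_lt
          rwa [e3] at h1
        have hyrd : ℓ (y * σ r) + 1 = ℓ y := desc_eq cs hyr
        have e4 : (u * σ r) * (y * σ r)⁻¹ = u * y⁻¹ := by group
        have hwky' : WkLe cs (y * σ r) (u * σ r) := by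
          unfold WkLe
          rw [e4]
          omega
        rcases cs.length_simple_mul (w * σ r) s with hcase | hcase
        · -- ascent subcase : apply the induction hypothesis
          have hne' : y * σ r ≠ σ s * (w * σ r) := by
            intro e
            exact hnotwk hcase (e ▸ hwky')
          have hle' := ihn (u * σ r) (w * σ r) (y * σ r) s (by omega)
            hwky' hw' hcase hvs' hy' hne'
          exact hfinish hle' hyr
        · -- descent subcase : direct
          exact hfinish (brle_trans cs hy' (hdesc_step hcase)) hyr
      · -- Case B : r is an ascent of y
        have hyr : ℓ y < ℓ (y * σ r) :=
          lt_of_le_of_ne hyr' (cs.length_mul_simple_ne y r).symm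
        have hwky : WkLe cs y (u * σ r) := wkle_mul_simple cs hy hur hyr
        have hyB : BrLe cs y (σ s * (w * σ r)) := by
          have h1 := liftB cs hylt hyr hswr_lt
          rwa [e3] at h1
        rcases cs.length_simple_mul (w * σ r) s with hcase | hcase
        · have hne' : y ≠ σ s * (w * σ r) := by
            intro e
            exact hnotwk hcase (e ▸ hwky)
          have hle' := ihn (u * σ r) (w * σ r) y s (by omega)
            hwky hw' hcase hvs' hyB hne'
          exact brle_trans cs hle' (brle_desc_right cs hrd)
        · exact brle_trans cs (brle_trans cs hyB (hdesc_step hcase))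
            (brle_desc_right cs hrd)

end BA

end Technical

/-- for a `W`-graph ideal generated by a single element, in the weak ascent
case every `y ∈ 𝔍` with `y < sw` satisfies `y ≤ w`. -/
theorem stmt14 (u : W) (J : Set B)
    (hWG : IsWGraphIdeal cs {w : W | WkLe cs w u} J)
    (w : W) (hw : WkLe cs w u) (s : B)
    (hwa : WA cs {w : W | WkLe cs w u} J s w)
    (y : W) (hy : WkLe cs y u)
    (hlt : BrLt cs y (cs.simple s * w)) :
    BrLe cs y w := by
  have hnotI : cs.simple s * w ∉ {w : W | WkLe cs w u} := hwa.2.2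
  have hasc : cs.length w < cs.length (cs.simple s * w) := hwa.1
  have hsw : cs.length (cs.simple s * w) = cs.length w + 1 := by
    have := cs.length_simple_mul w s
    omega
  have hwk : cs.length (u * w⁻¹) + cs.length w = cs.length u := hw
  have hvs : cs.length (u * w⁻¹ * cs.simple s) = cs.length (u * w⁻¹) + 1 := by
    rcases cs.length_mul_simple (u * w⁻¹) s with h | h
    · exact h
    · exfalso
      apply hnotI
      show WkLe cs (cs.simple s * w) u
      unfold WkLe
      have e : u * (cs.simple s * w)⁻¹ = u * w⁻¹ * cs.simple s := by
        rw [mul_inv_rev, cs.inv_simple, ← mul_assoc]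
      rw [e, hsw]
      omega
  exact BA.tech cs (cs.length u) u w y s le_rfl hy hw hsw hvs hlt.1 hlt.2

end WGI
end
end
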